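/- arXiv:0804.2052 — 6 statements merged into one kernel-verified Lean document; each statement's English description precedes it below -/
import Mathlib

section
/- The Leibniz boundary map d on the tensor algebra of a Leibniz algebra g, defined by d(g_1 ⊗ ⋯ ⊗ g_n) = Σ_{1≤i<j≤n} (-1)^j g_1 ⊗ ⋯ ⊗ g_{i-1} ⊗ [g_i,g_j] ⊗ g_{i+1} ⊗ ⋯ ⊗ ĝ_j ⊗ ⋯ ⊗ g_n, satisfies d ∘ d = 0. -/
open scoped TensorProduct
open PiTensorProduct


namespace LeibnizAux

/-- value of `succAbove`. -/
lemma sA_val {m : ℕ} (p : Fin (m+1)) (i : Fin m) :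
    ((p.succAbove i : Fin (m+1)) : ℕ) = if (i:ℕ) < (p:ℕ) then (i:ℕ) else (i:ℕ)+1 := by
  rcases lt_or_ge (Fin.castSucc i) p with h | h
  · rw [Fin.succAbove_of_castSucc_lt _ _ h]
    have : (i:ℕ) < (p:ℕ) := by simpa [Fin.lt_def] using h
    simp [this]
  · rw [Fin.succAbove_of_le_castSucc _ _ h]
    have : ¬ ((i:ℕ) < (p:ℕ)) := by simpa [Fin.le_def, Nat.not_lt] using h
    simp [this]

/-- inverse of `succAbove`: position of `x` after removing `p`. -/
def pos {m : ℕ} (p x : Fin (m+2)) : Fin (m+1) :=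
  if (x:ℕ) < (p:ℕ) then ⟨min (x:ℕ) m, by omega⟩ else ⟨(x:ℕ) - 1, by have := x.isLt; omega⟩

lemma pos_val_lt {m : ℕ} {p x : Fin (m+2)} (h : (x:ℕ) < (p:ℕ)) :
    ((pos p x : Fin (m+1)) : ℕ) = (x:ℕ) := by
  have hp := p.isLt
  simp only [pos, if_pos h]
  simp; omega

lemma pos_val_gt {m : ℕ} {p x : Fin (m+2)} (h : (p:ℕ) < (x:ℕ)) :
    ((pos p x : Fin (m+1)) : ℕ) = (x:ℕ) - 1 := by
  simp only [pos, if_neg (by omega : ¬ ((x:ℕ) < (p:ℕ)))]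

lemma pos_succAbove {m : ℕ} {p x : Fin (m+2)} (h : x ≠ p) :
    p.succAbove (pos p x) = x := by
  apply Fin.ext
  rw [sA_val]
  have hne : (x:ℕ) ≠ (p:ℕ) := fun hc => h (Fin.ext hc)
  rcases Nat.lt_or_ge (x:ℕ) (p:ℕ) with hh | hh
  · rw [pos_val_lt hh, if_pos hh]
  · have hgt : (p:ℕ) < (x:ℕ) := by omega
    rw [pos_val_gt hgt, if_neg (by omega)]
    omega

lemma pos_succAbove' {m : ℕ} (p : Fin (m+2)) (q : Fin (m+1)) :
    pos p (p.succAbove q) = q := by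
  apply Fin.ext
  have h := sA_val p q
  rcases Nat.lt_or_ge (q:ℕ) (p:ℕ) with hh | hh
  · rw [if_pos hh] at h
    rw [pos_val_lt (by omega), h]
  · rw [if_neg (by omega)] at h
    rw [pos_val_gt (by omega), h]
    omega

lemma pos_lt_pos {m : ℕ} {p x y : Fin (m+2)} (hx : x ≠ p) (hy : y ≠ p) (hxy : x < y) :
    pos p x < pos p y := by
  have hx' : (x:ℕ) ≠ (p:ℕ) := fun hc => hx (Fin.ext hc)
  have hy' : (y:ℕ) ≠ (p:ℕ) := fun hc => hy (Fin.ext hc)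
  have hxy' : (x:ℕ) < (y:ℕ) := hxy
  rw [Fin.lt_def]
  rcases Nat.lt_or_ge (x:ℕ) (p:ℕ) with h1 | h1 <;> rcases Nat.lt_or_ge (y:ℕ) (p:ℕ) with h2 | h2
  · rw [pos_val_lt h1, pos_val_lt h2]; omega
  · rw [pos_val_lt h1, pos_val_gt (by omega)]; omega
  · omega
  · rw [pos_val_gt (by omega), pos_val_gt (by omega)]; omega

/-- two strictly monotone maps `Fin n → Fin (n+2)` missing the same two points agree. -/
lemma strictMono_eq_of_misses {n : ℕ} (x y : Fin (n+2)) (hxy : x ≠ y)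
    (f g : Fin n → Fin (n+2)) (hf : StrictMono f) (hg : StrictMono g)
    (hfm : ∀ m, f m ≠ x ∧ f m ≠ y) (hgm : ∀ m, g m ≠ x ∧ g m ≠ y) : f = g := by
  have hcard : ({x, y}ᶜ : Finset (Fin (n+2))).card = n := by
    rw [Finset.card_compl, Finset.card_insert_of_notMem (by simp [hxy]), Finset.card_singleton]
    simp
  rw [Finset.orderEmbOfFin_unique hcard (fun m => by simp [(hfm m).1, (hfm m).2]) hf,
      Finset.orderEmbOfFin_unique hcard (fun m => by simp [(hgm m).1, (hgm m).2]) hg]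

lemma neg_one_pow_eq_neg {K : Type*} [Field K] {a c : ℕ} (h : (a + c) % 2 = 1) :
    (-1:K)^a = -(-1:K)^c := by
  have hodd : Odd (a + c) := Nat.odd_iff.2 h
  have h1 : (-1:K)^(a+c) = -1 := Odd.neg_one_pow hodd
  have h2 : (-1:K)^c * (-1:K)^c = 1 := by
    rw [← pow_add]; exact Even.neg_one_pow ⟨c, rfl⟩
  calc (-1:K)^a = (-1:K)^a * ((-1:K)^c * (-1:K)^c) := by rw [h2, mul_one]
    _ = ((-1:K)^(a+c)) * (-1:K)^c := by rw [pow_add]; ring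
    _ = -(-1:K)^c := by rw [h1]; ring


variable {K L : Type*} [Field K] [AddCommGroup L] [Module K L]

/-- elementary Leibniz-boundary operation: bracket slot `k` with slot `l`, remove slot `l`. -/
def mu (b : L →ₗ[K] L →ₗ[K] L) {m : ℕ} (k l : Fin (m+1)) (v : Fin (m+1) → L) : Fin m → L :=
  l.removeNth (Function.update v k (b (v k) (v l)))

lemma mu_apply (b : L →ₗ[K] L →ₗ[K] L) {m : ℕ} (k l : Fin (m+1)) (v : Fin (m+1) → L)
    (x : Fin m) :
    mu b k l v x = Function.update v k (b (v k) (v l)) (l.succAbove x) := rfl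

variable (b : L →ₗ[K] L →ₗ[K] L) {n : ℕ} (v : Fin (n+2) → L)

/-- generic (type A) composition formula. -/
lemma mu_mu (i j : Fin (n+2)) (k l : Fin (n+1))
    (h1 : j.succAbove k ≠ i) (h2 : j.succAbove l ≠ i) :
    mu b k l (mu b i j v) =
      (Function.update (Function.update v i (b (v i) (v j))) (j.succAbove k)
        (b (v (j.succAbove k)) (v (j.succAbove l)))) ∘ (j.succAbove ∘ l.succAbove) := by
  have hk : mu b i j v k = v (j.succAbove k) := by
    rw [mu_apply, Function.update_of_ne h1]
  have hl : mu b i j v l = v (j.succAbove l) := by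
    rw [mu_apply, Function.update_of_ne h2]
  funext m
  rw [Function.comp_apply, Function.comp_apply, mu_apply, hk, hl]
  rcases eq_or_ne (l.succAbove m) k with h | h
  · rw [h, Function.update_self, Function.update_self]
  · rw [Function.update_of_ne h, mu_apply,
      Function.update_of_ne (fun hc => h (Fin.succAbove_right_injective hc))]

/-- type B composition formula: the second bracket eats the first one on the left. -/
lemma mu_mu_B (i j : Fin (n+2)) (k l : Fin (n+1))
    (h1 : j.succAbove k = i) (hkl : k ≠ l) :
    mu b k l (mu b i j v) =
      (Function.update v i (b (b (v i) (v j)) (v (j.succAbove l)))) ∘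
        (j.succAbove ∘ l.succAbove) := by
  have h2 : j.succAbove l ≠ i := by
    rw [← h1]; exact fun hc => hkl (Fin.succAbove_right_injective hc).symm
  have hk : mu b i j v k = b (v i) (v j) := by
    rw [mu_apply, h1, Function.update_self]
  have hl : mu b i j v l = v (j.succAbove l) := by
    rw [mu_apply, Function.update_of_ne h2]
  funext m
  rw [Function.comp_apply, Function.comp_apply, mu_apply, hk, hl]
  rcases eq_or_ne (l.succAbove m) k with h | h
  · rw [h, Function.update_self, h1, Function.update_self]
  · have he : j.succAbove (l.succAbove m) ≠ i := by
      rw [← h1]; exact fun hc => h (Fin.succAbove_right_injective hc)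
    rw [Function.update_of_ne h, mu_apply, Function.update_of_ne he,
      Function.update_of_ne he]

/-- type C composition formula: the second bracket eats the first one on the right. -/
lemma mu_mu_C (i j : Fin (n+2)) (k l : Fin (n+1))
    (h2 : j.succAbove l = i) (hkl : k ≠ l) :
    mu b k l (mu b i j v) =
      (Function.update v (j.succAbove k) (b (v (j.succAbove k)) (b (v i) (v j)))) ∘
        (j.succAbove ∘ l.succAbove) := by
  have h1 : j.succAbove k ≠ i := by
    rw [← h2]; exact fun hc => hkl (Fin.succAbove_right_injective hc)
  have hk : mu b i j v k = v (j.succAbove k) := by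
    rw [mu_apply, Function.update_of_ne h1]
  have hl : mu b i j v l = b (v i) (v j) := by
    rw [mu_apply, h2, Function.update_self]
  funext m
  rw [Function.comp_apply, Function.comp_apply, mu_apply, hk, hl]
  rcases eq_or_ne (l.succAbove m) k with h | h
  · rw [h, Function.update_self, Function.update_self]
  · have he : j.succAbove (l.succAbove m) ≠ i := by
      rw [← h2]
      exact fun hc => Fin.succAbove_ne l m (Fin.succAbove_right_injective hc)
    rw [Function.update_of_ne h, mu_apply, Function.update_of_ne he,
      Function.update_of_ne (fun hc => h (Fin.succAbove_right_injective hc))]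

lemma triple_cancel (br : L →ₗ[K] L →ₗ[K] L)
    (hleib : ∀ x y z : L, br (br x y) z = br (br x z) y + br x (br y z))
    (v : Fin (n+2) → L) {a b c : Fin (n+2)} (hab : a < b) (hbc : b < c) :
    ((-1:K)^((c:ℕ)+1) * (-1:K)^(((pos c b : Fin (n+1)):ℕ)+1)) •
        (tprod K (mu br (pos c a) (pos c b) (mu br b c v)) : ⨂[K]^n L)
      + ((-1:K)^((c:ℕ)+1) * (-1:K)^(((pos c b : Fin (n+1)):ℕ)+1)) •
        tprod K (mu br (pos c a) (pos c b) (mu br a c v))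
      + ((-1:K)^((b:ℕ)+1) * (-1:K)^(((pos b c : Fin (n+1)):ℕ)+1)) •
        tprod K (mu br (pos b a) (pos b c) (mu br a b v)) = 0 := by
  have hac : a < c := hab.trans hbc
  have e1 : c.succAbove (pos c b) = b := pos_succAbove (ne_of_lt hbc)
  have e2 : c.succAbove (pos c a) = a := pos_succAbove (ne_of_lt hac)
  have e3 : b.succAbove (pos b a) = a := pos_succAbove (ne_of_lt hab)
  have e4 : b.succAbove (pos b c) = c := pos_succAbove (ne_of_gt hbc)
  have hkl1 : pos c a ≠ pos c b := fun h => (ne_of_lt hab) (by rw [← e2, ← e1, h])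
  have hkl2 : pos b a ≠ pos b c := fun h => (ne_of_lt hac) (by rw [← e3, ← e4, h])
  rw [mu_mu_C br v b c (pos c a) (pos c b) e1 hkl1]
  rw [mu_mu_B br v a c (pos c a) (pos c b) e2 hkl1]
  rw [mu_mu_B br v a b (pos b a) (pos b c) e3 hkl2]
  rw [e1, e2, e4]
  have hE : b.succAbove ∘ (pos b c).succAbove = c.succAbove ∘ (pos c b).succAbove := by
    apply strictMono_eq_of_misses b c (ne_of_lt hbc)
    · exact (Fin.strictMono_succAbove b).comp (Fin.strictMono_succAbove (pos b c))
    · exact (Fin.strictMono_succAbove c).comp (Fin.strictMono_succAbove (pos c b))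
    · intro m
      refine ⟨Fin.succAbove_ne b _, fun hc2 => ?_⟩
      rw [Function.comp_apply] at hc2
      exact Fin.succAbove_ne (pos b c) m (Fin.succAbove_right_injective (hc2.trans e4.symm))
    · intro m
      refine ⟨fun hc2 => ?_, Fin.succAbove_ne c _⟩
      rw [Function.comp_apply] at hc2
      exact Fin.succAbove_ne (pos c b) m (Fin.succAbove_right_injective (hc2.trans e1.symm))
  rw [hE]
  obtain ⟨a0, ha0⟩ := Fin.exists_succAbove_eq hkl1
  have hinj : Function.Injective (c.succAbove ∘ (pos c b).succAbove) :=
    Fin.succAbove_right_injective.comp Fin.succAbove_right_injective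
  have hEa : (c.succAbove ∘ (pos c b).succAbove) a0 = a := by
    rw [Function.comp_apply, ha0, e2]
  have hupd : ∀ X : L, Function.update v a X ∘ (c.succAbove ∘ (pos c b).succAbove)
      = Function.update (v ∘ (c.succAbove ∘ (pos c b).succAbove)) a0 X := by
    intro X
    rw [← hEa]
    exact Function.update_comp_eq_of_injective v hinj a0 X
  rw [hupd, hupd, hupd]
  rw [hleib (v a) (v b) (v c)]
  rw [MultilinearMap.map_update_add]
  have hbc' : (b:ℕ) < (c:ℕ) := hbc
  have hposbc : ((pos b c : Fin (n+1)) : ℕ) = (c:ℕ) - 1 := pos_val_gt hbc'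
  have hposcb : ((pos c b : Fin (n+1)) : ℕ) = (b:ℕ) := pos_val_lt hbc'
  have hs : (-1:K)^((b:ℕ)+1) * (-1:K)^(((pos b c : Fin (n+1)):ℕ)+1)
      = -((-1:K)^((c:ℕ)+1) * (-1:K)^(((pos c b : Fin (n+1)):ℕ)+1)) := by
    rw [hposbc, hposcb, ← pow_add, ← pow_add]
    exact neg_one_pow_eq_neg (by omega)
  rw [hs]
  module

lemma pair_cancel (br : L →ₗ[K] L →ₗ[K] L) (v : Fin (n+2) → L)
    (i j : Fin (n+2)) (k l : Fin (n+1))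
    (hB : j.succAbove k ≠ i) (hC : j.succAbove l ≠ i) :
    ((-1:K)^((j:ℕ)+1) * (-1:K)^((l:ℕ)+1)) •
        (tprod K (mu br k l (mu br i j v)) : ⨂[K]^n L)
      + ((-1:K)^(((j.succAbove l):ℕ)+1) *
          (-1:K)^(((pos (j.succAbove l) j : Fin (n+1)):ℕ)+1)) •
        tprod K (mu br (pos (j.succAbove l) i) (pos (j.succAbove l) j)
          (mu br (j.succAbove k) (j.succAbove l) v)) = 0 := by
  have hj2j : j.succAbove l ≠ j := Fin.succAbove_ne j l
  have hij2 : i ≠ j.succAbove l := fun h => hC h.symm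
  have ek : (j.succAbove l).succAbove (pos (j.succAbove l) i) = i := pos_succAbove hij2
  have el : (j.succAbove l).succAbove (pos (j.succAbove l) j) = j := pos_succAbove hj2j.symm
  rw [mu_mu br v i j k l hB hC]
  rw [mu_mu br v (j.succAbove k) (j.succAbove l) (pos (j.succAbove l) i)
    (pos (j.succAbove l) j)
    (by rw [ek]; exact fun hc => hB hc.symm)
    (by rw [el]; exact fun hc => Fin.succAbove_ne j k hc.symm)]
  rw [ek, el]
  rw [Function.update_comm (show i ≠ j.succAbove k from fun h => hB h.symm)]
  have hEE : j.succAbove ∘ l.succAbove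
      = (j.succAbove l).succAbove ∘ (pos (j.succAbove l) j).succAbove := by
    apply strictMono_eq_of_misses j (j.succAbove l) hj2j.symm
    · exact (Fin.strictMono_succAbove j).comp (Fin.strictMono_succAbove l)
    · exact ((Fin.strictMono_succAbove (j.succAbove l)).comp
        (Fin.strictMono_succAbove (pos (j.succAbove l) j)))
    · intro m
      refine ⟨Fin.succAbove_ne j _, fun hc2 => ?_⟩
      rw [Function.comp_apply] at hc2
      exact Fin.succAbove_ne l m (Fin.succAbove_right_injective hc2)
    · intro m
      refine ⟨fun hc2 => ?_, Fin.succAbove_ne (j.succAbove l) _⟩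
      rw [Function.comp_apply] at hc2
      exact Fin.succAbove_ne (pos (j.succAbove l) j) m
        (Fin.succAbove_right_injective (hc2.trans el.symm))
  rw [hEE]
  have hsign : (-1:K)^((j:ℕ)+1) * (-1:K)^((l:ℕ)+1)
      = -((-1:K)^(((j.succAbove l):ℕ)+1) *
          (-1:K)^(((pos (j.succAbove l) j : Fin (n+1)):ℕ)+1)) := by
    have h1 := sA_val j l
    rcases Nat.lt_or_ge (l:ℕ) (j:ℕ) with hh | hh
    · rw [if_pos hh] at h1
      have h2 : ((pos (j.succAbove l) j : Fin (n+1)):ℕ) = (j:ℕ) - 1 :=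
        pos_val_gt (by rw [h1]; exact hh)
      rw [h1, h2, ← pow_add, ← pow_add]
      exact neg_one_pow_eq_neg (by omega)
    · rw [if_neg (by omega)] at h1
      have h2 : ((pos (j.succAbove l) j : Fin (n+1)):ℕ) = (j:ℕ) :=
        pos_val_lt (by rw [h1]; omega)
      rw [h1, h2, ← pow_add, ← pow_add]
      exact neg_one_pow_eq_neg (by omega)
  rw [hsign]
  module

lemma sumA_eq_zero (br : L →ₗ[K] L →ₗ[K] L) (v : Fin (n+2) → L) :
    ∑ r ∈ (((Finset.univ.filter (fun r : Fin (n+2) × Fin (n+2) × Fin (n+1) × Fin (n+1) =>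
          r.2.1 < r.1 ∧ r.2.2.2 < r.2.2.1)).filter
            (fun r => ¬ r.1.succAbove r.2.2.1 = r.2.1)).filter
            (fun r => ¬ r.1.succAbove r.2.2.2 = r.2.1)),
      ((-1:K)^((r.1:ℕ)+1) * (-1:K)^((r.2.2.1:ℕ)+1)) •
        (tprod K (mu br r.2.2.2 r.2.2.1 (mu br r.2.1 r.1 v)) : ⨂[K]^n L) = 0 := by
  refine Finset.sum_involution
    (fun r _ => (r.1.succAbove r.2.2.1, r.1.succAbove r.2.2.2,
      pos (r.1.succAbove r.2.2.1) r.1, pos (r.1.succAbove r.2.2.1) r.2.1)) ?_ ?_ ?_ ?_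
  · rintro ⟨j, i, l, k⟩ hr
    simp only [Finset.mem_filter, Finset.mem_univ, true_and] at hr
    obtain ⟨⟨⟨hij, hkl⟩, hnC⟩, hnB⟩ := hr
    exact pair_cancel br v i j k l hnB hnC
  · rintro ⟨j, i, l, k⟩ hr hf hgr
    exact Fin.succAbove_ne j l (congrArg Prod.fst hgr)
  · rintro ⟨j, i, l, k⟩ hr
    simp only [Finset.mem_filter, Finset.mem_univ, true_and] at hr ⊢
    obtain ⟨⟨⟨hij, hkl⟩, hnC⟩, hnB⟩ := hr
    have hine : i ≠ j.succAbove l := fun h => hnC h.symm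
    have hjne : j ≠ j.succAbove l := (Fin.succAbove_ne j l).symm
    refine ⟨⟨⟨Fin.succAbove_lt_succAbove_iff.mpr hkl, pos_lt_pos hine hjne hij⟩, ?_⟩, ?_⟩
    · rw [pos_succAbove hjne]; exact fun h => Fin.succAbove_ne j k h.symm
    · rw [pos_succAbove hine]; exact fun h => hnB h.symm
  · rintro ⟨j, i, l, k⟩ hr
    simp only [Finset.mem_filter, Finset.mem_univ, true_and] at hr
    obtain ⟨⟨⟨hij, hkl⟩, hnC⟩, hnB⟩ := hr
    have hine : i ≠ j.succAbove l := fun h => hnC h.symm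
    have hjne : j ≠ j.succAbove l := (Fin.succAbove_ne j l).symm
    simp only [Prod.mk.injEq]
    refine ⟨pos_succAbove hjne, pos_succAbove hine, ?_, ?_⟩
    · rw [pos_succAbove hjne, pos_succAbove']
    · rw [pos_succAbove hjne, pos_succAbove']

lemma sumC_eq (br : L →ₗ[K] L →ₗ[K] L) (v : Fin (n+2) → L) :
    ∑ r ∈ ((Finset.univ.filter (fun r : Fin (n+2) × Fin (n+2) × Fin (n+1) × Fin (n+1) =>
          r.2.1 < r.1 ∧ r.2.2.2 < r.2.2.1)).filter
            (fun r => r.1.succAbove r.2.2.1 = r.2.1)),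
      ((-1:K)^((r.1:ℕ)+1) * (-1:K)^((r.2.2.1:ℕ)+1)) •
        (tprod K (mu br r.2.2.2 r.2.2.1 (mu br r.2.1 r.1 v)) : ⨂[K]^n L)
    = ∑ t ∈ Finset.univ.filter (fun t : Fin (n+2) × Fin (n+2) × Fin (n+2) =>
        t.2.2 < t.2.1 ∧ t.2.1 < t.1),
      ((-1:K)^((t.1:ℕ)+1) * (-1:K)^(((pos t.1 t.2.1 : Fin (n+1)):ℕ)+1)) •
        (tprod K (mu br (pos t.1 t.2.2) (pos t.1 t.2.1) (mu br t.2.1 t.1 v)) : ⨂[K]^n L) := by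
  refine Finset.sum_nbij' (fun r => (r.1, r.2.1, r.1.succAbove r.2.2.2))
    (fun t => (t.1, t.2.1, pos t.1 t.2.1, pos t.1 t.2.2)) ?_ ?_ ?_ ?_ ?_
  · rintro ⟨j, i, l, k⟩ hr
    simp only [Finset.mem_filter, Finset.mem_univ, true_and] at hr ⊢
    obtain ⟨⟨hij, hkl⟩, hPC⟩ := hr
    refine ⟨?_, hij⟩
    rw [← hPC]
    exact Fin.succAbove_lt_succAbove_iff.mpr hkl
  · rintro ⟨c, b, a⟩ ht
    simp only [Finset.mem_filter, Finset.mem_univ, true_and] at ht ⊢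
    obtain ⟨hab, hbc⟩ := ht
    have hbne : b ≠ c := ne_of_lt hbc
    have hane : a ≠ c := ne_of_lt (hab.trans hbc)
    exact ⟨⟨hbc, pos_lt_pos hane hbne hab⟩, pos_succAbove hbne⟩
  · rintro ⟨j, i, l, k⟩ hr
    simp only [Finset.mem_filter, Finset.mem_univ, true_and] at hr
    obtain ⟨⟨hij, hkl⟩, hPC⟩ := hr
    simp only [Prod.mk.injEq, true_and]
    refine ⟨?_, ?_⟩
    · rw [← hPC, pos_succAbove']
    · rw [pos_succAbove']
  · rintro ⟨c, b, a⟩ ht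
    simp only [Finset.mem_filter, Finset.mem_univ, true_and] at ht
    obtain ⟨hab, hbc⟩ := ht
    have hane : a ≠ c := ne_of_lt (hab.trans hbc)
    simp only [Prod.mk.injEq, true_and]
    exact pos_succAbove hane
  · rintro ⟨j, i, l, k⟩ hr
    simp only [Finset.mem_filter, Finset.mem_univ, true_and] at hr
    obtain ⟨⟨hij, hkl⟩, hPC⟩ := hr
    rw [pos_succAbove', ← hPC, pos_succAbove']

lemma sumB1_eq (br : L →ₗ[K] L →ₗ[K] L) (v : Fin (n+2) → L) :
    ∑ r ∈ ((((Finset.univ.filter (fun r : Fin (n+2) × Fin (n+2) × Fin (n+1) × Fin (n+1) =>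
          r.2.1 < r.1 ∧ r.2.2.2 < r.2.2.1)).filter
            (fun r => ¬ r.1.succAbove r.2.2.1 = r.2.1)).filter
            (fun r => r.1.succAbove r.2.2.2 = r.2.1)).filter
            (fun r => (r.2.2.1:ℕ) < (r.1:ℕ))),
      ((-1:K)^((r.1:ℕ)+1) * (-1:K)^((r.2.2.1:ℕ)+1)) •
        (tprod K (mu br r.2.2.2 r.2.2.1 (mu br r.2.1 r.1 v)) : ⨂[K]^n L)
    = ∑ t ∈ Finset.univ.filter (fun t : Fin (n+2) × Fin (n+2) × Fin (n+2) =>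
        t.2.2 < t.2.1 ∧ t.2.1 < t.1),
      ((-1:K)^((t.1:ℕ)+1) * (-1:K)^(((pos t.1 t.2.1 : Fin (n+1)):ℕ)+1)) •
        (tprod K (mu br (pos t.1 t.2.2) (pos t.1 t.2.1) (mu br t.2.2 t.1 v)) : ⨂[K]^n L) := by
  refine Finset.sum_nbij' (fun r => (r.1, r.1.succAbove r.2.2.1, r.2.1))
    (fun t => (t.1, t.2.2, pos t.1 t.2.1, pos t.1 t.2.2)) ?_ ?_ ?_ ?_ ?_
  · rintro ⟨j, i, l, k⟩ hr
    simp only [Finset.mem_filter, Finset.mem_univ, true_and] at hr ⊢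
    obtain ⟨⟨⟨⟨hij, hkl⟩, hnC⟩, hPB⟩, hlj⟩ := hr
    constructor
    · rw [← hPB]
      exact Fin.succAbove_lt_succAbove_iff.mpr hkl
    · rw [Fin.lt_def, sA_val, if_pos hlj]
      exact hlj
  · rintro ⟨c, b, a⟩ ht
    simp only [Finset.mem_filter, Finset.mem_univ, true_and] at ht ⊢
    obtain ⟨hab, hbc⟩ := ht
    have hbne : b ≠ c := ne_of_lt hbc
    have hane : a ≠ c := ne_of_lt (hab.trans hbc)
    have hbc' : (b:ℕ) < (c:ℕ) := hbc
    refine ⟨⟨⟨⟨hab.trans hbc, pos_lt_pos hane hbne hab⟩, ?_⟩, pos_succAbove hane⟩, ?_⟩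
    · rw [pos_succAbove hbne]
      exact ne_of_gt hab
    · rw [pos_val_lt hbc']
      exact hbc'
  · rintro ⟨j, i, l, k⟩ hr
    simp only [Finset.mem_filter, Finset.mem_univ, true_and] at hr
    obtain ⟨⟨⟨⟨hij, hkl⟩, hnC⟩, hPB⟩, hlj⟩ := hr
    simp only [Prod.mk.injEq, true_and]
    refine ⟨?_, ?_⟩
    · rw [pos_succAbove']
    · rw [← hPB, pos_succAbove']
  · rintro ⟨c, b, a⟩ ht
    simp only [Finset.mem_filter, Finset.mem_univ, true_and] at ht
    obtain ⟨hab, hbc⟩ := ht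
    have hbne : b ≠ c := ne_of_lt hbc
    simp only [Prod.mk.injEq, true_and, and_true]
    exact pos_succAbove hbne
  · rintro ⟨j, i, l, k⟩ hr
    simp only [Finset.mem_filter, Finset.mem_univ, true_and] at hr
    obtain ⟨⟨⟨⟨hij, hkl⟩, hnC⟩, hPB⟩, hlj⟩ := hr
    rw [pos_succAbove', ← hPB, pos_succAbove']

lemma sumB2_eq (br : L →ₗ[K] L →ₗ[K] L) (v : Fin (n+2) → L) :
    ∑ r ∈ ((((Finset.univ.filter (fun r : Fin (n+2) × Fin (n+2) × Fin (n+1) × Fin (n+1) =>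
          r.2.1 < r.1 ∧ r.2.2.2 < r.2.2.1)).filter
            (fun r => ¬ r.1.succAbove r.2.2.1 = r.2.1)).filter
            (fun r => r.1.succAbove r.2.2.2 = r.2.1)).filter
            (fun r => ¬ (r.2.2.1:ℕ) < (r.1:ℕ))),
      ((-1:K)^((r.1:ℕ)+1) * (-1:K)^((r.2.2.1:ℕ)+1)) •
        (tprod K (mu br r.2.2.2 r.2.2.1 (mu br r.2.1 r.1 v)) : ⨂[K]^n L)
    = ∑ t ∈ Finset.univ.filter (fun t : Fin (n+2) × Fin (n+2) × Fin (n+2) =>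
        t.2.2 < t.2.1 ∧ t.2.1 < t.1),
      ((-1:K)^((t.2.1:ℕ)+1) * (-1:K)^(((pos t.2.1 t.1 : Fin (n+1)):ℕ)+1)) •
        (tprod K (mu br (pos t.2.1 t.2.2) (pos t.2.1 t.1) (mu br t.2.2 t.2.1 v)) : ⨂[K]^n L) := by
  refine Finset.sum_nbij' (fun r => (r.1.succAbove r.2.2.1, r.1, r.2.1))
    (fun t => (t.2.1, t.2.2, pos t.2.1 t.1, pos t.2.1 t.2.2)) ?_ ?_ ?_ ?_ ?_
  · rintro ⟨j, i, l, k⟩ hr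
    simp only [Finset.mem_filter, Finset.mem_univ, true_and] at hr ⊢
    obtain ⟨⟨⟨⟨hij, hkl⟩, hnC⟩, hPB⟩, hlj⟩ := hr
    refine ⟨hij, ?_⟩
    rw [Fin.lt_def, sA_val, if_neg hlj]
    omega
  · rintro ⟨c, b, a⟩ ht
    simp only [Finset.mem_filter, Finset.mem_univ, true_and] at ht ⊢
    obtain ⟨hab, hbc⟩ := ht
    have hcne : c ≠ b := ne_of_gt hbc
    have hane : a ≠ b := ne_of_lt hab
    have hbc' : (b:ℕ) < (c:ℕ) := hbc
    refine ⟨⟨⟨⟨hab, pos_lt_pos hane hcne (hab.trans hbc)⟩, ?_⟩, pos_succAbove hane⟩, ?_⟩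
    · rw [pos_succAbove hcne]
      exact ne_of_gt (hab.trans hbc)
    · rw [pos_val_gt hbc']
      omega
  · rintro ⟨j, i, l, k⟩ hr
    simp only [Finset.mem_filter, Finset.mem_univ, true_and] at hr
    obtain ⟨⟨⟨⟨hij, hkl⟩, hnC⟩, hPB⟩, hlj⟩ := hr
    simp only [Prod.mk.injEq, true_and]
    refine ⟨?_, ?_⟩
    · rw [pos_succAbove']
    · rw [← hPB, pos_succAbove']
  · rintro ⟨c, b, a⟩ ht
    simp only [Finset.mem_filter, Finset.mem_univ, true_and] at ht
    obtain ⟨hab, hbc⟩ := ht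
    have hcne : c ≠ b := ne_of_gt hbc
    simp only [Prod.mk.injEq, true_and, and_true]
    exact pos_succAbove hcne
  · rintro ⟨j, i, l, k⟩ hr
    simp only [Finset.mem_filter, Finset.mem_univ, true_and] at hr
    obtain ⟨⟨⟨⟨hij, hkl⟩, hnC⟩, hPB⟩, hlj⟩ := hr
    rw [pos_succAbove', ← hPB, pos_succAbove']

lemma key (br : L →ₗ[K] L →ₗ[K] L)
    (hleib : ∀ x y z : L, br (br x y) z = br (br x z) y + br x (br y z))
    (v : Fin (n+2) → L) :
    ∑ r ∈ Finset.univ.filter (fun r : Fin (n+2) × Fin (n+2) × Fin (n+1) × Fin (n+1) =>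
          r.2.1 < r.1 ∧ r.2.2.2 < r.2.2.1),
      ((-1:K)^((r.1:ℕ)+1) * (-1:K)^((r.2.2.1:ℕ)+1)) •
        (tprod K (mu br r.2.2.2 r.2.2.1 (mu br r.2.1 r.1 v)) : ⨂[K]^n L) = 0 := by
  rw [← Finset.sum_filter_add_sum_filter_not
    (Finset.univ.filter (fun r : Fin (n+2) × Fin (n+2) × Fin (n+1) × Fin (n+1) =>
      r.2.1 < r.1 ∧ r.2.2.2 < r.2.2.1))
    (fun r => r.1.succAbove r.2.2.1 = r.2.1)]
  rw [← Finset.sum_filter_add_sum_filter_not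
    ((Finset.univ.filter (fun r : Fin (n+2) × Fin (n+2) × Fin (n+1) × Fin (n+1) =>
      r.2.1 < r.1 ∧ r.2.2.2 < r.2.2.1)).filter
        (fun r => ¬ r.1.succAbove r.2.2.1 = r.2.1))
    (fun r => r.1.succAbove r.2.2.2 = r.2.1)]
  rw [← Finset.sum_filter_add_sum_filter_not
    (((Finset.univ.filter (fun r : Fin (n+2) × Fin (n+2) × Fin (n+1) × Fin (n+1) =>
      r.2.1 < r.1 ∧ r.2.2.2 < r.2.2.1)).filter
        (fun r => ¬ r.1.succAbove r.2.2.1 = r.2.1)).filter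
        (fun r => r.1.succAbove r.2.2.2 = r.2.1))
    (fun r => (r.2.2.1:ℕ) < (r.1:ℕ))]
  rw [sumA_eq_zero br v, add_zero, sumC_eq br v, sumB1_eq br v, sumB2_eq br v]
  rw [← Finset.sum_add_distrib, ← Finset.sum_add_distrib]
  apply Finset.sum_eq_zero
  rintro ⟨c, b, a⟩ ht
  simp only [Finset.mem_filter, Finset.mem_univ, true_and] at ht
  obtain ⟨hab, hbc⟩ := ht
  rw [← add_assoc]
  exact triple_cancel br hleib v hab hbc

lemma sum4 {M : Type*} [AddCommMonoid M]
    (f : Fin (n+2) → Fin (n+2) → Fin (n+1) → Fin (n+1) → M) :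
    (∑ j : Fin (n+2), ∑ i ∈ Finset.Iio j, ∑ l : Fin (n+1), ∑ k ∈ Finset.Iio l, f j i l k)
      = ∑ r ∈ Finset.univ.filter
          (fun r : Fin (n+2) × Fin (n+2) × Fin (n+1) × Fin (n+1) =>
            r.2.1 < r.1 ∧ r.2.2.2 < r.2.2.1),
          f r.1 r.2.1 r.2.2.1 r.2.2.2 := by
  rw [Finset.sum_filter]
  simp only [Fintype.sum_prod_type]
  refine Finset.sum_congr rfl fun j _ => ?_
  rw [show Finset.Iio j = Finset.univ.filter (· < j) from by ext x; simp, Finset.sum_filter]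
  refine Finset.sum_congr rfl fun i _ => ?_
  by_cases hij : i < j
  · simp only [hij, if_true, true_and]
    refine Finset.sum_congr rfl fun l _ => ?_
    rw [show Finset.Iio l = Finset.univ.filter (· < l) from by ext x; simp, Finset.sum_filter]
  · simp [hij]

end LeibnizAux


/-- The Leibniz boundary map
`d(g_1 ⊗ ⋯ ⊗ g_n) = Σ_{i<j} (-1)^j g_1 ⊗ ⋯ ⊗ [g_i,g_j] ⊗ ⋯ ⊗ ĝ_j ⊗ ⋯ ⊗ g_n`
on tensor powers of a Leibniz algebra squares to zero.
Here `d n : g^{⊗(n+1)} → g^{⊗n}` and indices are 0-based, so the sign is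
`(-1)^(j+1)` for the 0-based index `j`. -/
theorem leibniz_differential_squared_zero
    {K L : Type*} [Field K] [CharZero K] [AddCommGroup L] [Module K L]
    (b : L →ₗ[K] L →ₗ[K] L)
    (hleib : ∀ x y z : L, b (b x y) z = b (b x z) y + b x (b y z))
    (d : ∀ n : ℕ, (⨂[K]^(n+1) L) →ₗ[K] (⨂[K]^n L))
    (hd : ∀ (n : ℕ) (v : Fin (n+1) → L),
      d n (tprod K v) = ∑ j : Fin (n+1), ∑ i ∈ Finset.Iio j,
        ((-1 : K) ^ ((j : ℕ) + 1)) •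
          tprod K (j.removeNth (Function.update v i (b (v i) (v j))))) :
    ∀ n : ℕ, (d n) ∘ₗ (d (n+1)) = 0 := by
  intro n
  refine PiTensorProduct.ext (MultilinearMap.ext fun v => ?_)
  simp only [LinearMap.compMultilinearMap_apply, LinearMap.coe_comp, Function.comp_apply,
    LinearMap.zero_comp, LinearMap.zero_apply]
  rw [hd]
  simp only [map_sum, map_smul, hd]
  have fold : ∀ (m : ℕ) (kk ll : Fin (m+1)) (w : Fin (m+1) → L),
      ll.removeNth (Function.update w kk (b (w kk) (w ll))) = LeibnizAux.mu b kk ll w :=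
    fun _ _ _ _ => rfl
  simp only [fold]
  simp only [Finset.smul_sum, smul_smul]
  rw [LeibnizAux.sum4]
  exact LeibnizAux.key b hleib v
end

section
/- The adjoint action of a Leibniz algebra g on its tensor powers, defined by [g_1 ⊗ ⋯ ⊗ g_n, g] := Σ_{i=1}^n g_1 ⊗ ⋯ ⊗ [g_i, g] ⊗ ⋯ ⊗ g_n, commutes with the Leibniz differential: d([α, g]) = [d(α), g] for all α ∈ g^{⊗n} and g ∈ g. -/
open scoped TensorProduct
open PiTensorProduct


lemma removeNth_update_succAbove {n : ℕ} {α : Type*} (p : Fin (n+1)) (i : Fin n)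
    (x : α) (f : Fin (n+1) → α) :
    p.removeNth (Function.update f (p.succAbove i) x) = Function.update (p.removeNth f) i x := by
  ext m
  simp [Fin.removeNth, Function.update_apply, Fin.succAbove_right_inj]

lemma key_sum {K L : Type*} [Field K] [AddCommGroup L] [Module K L]
    (b : L →ₗ[K] L →ₗ[K] L)
    (hleib : ∀ x y z : L, b (b x y) z = b (b x z) y + b x (b y z))
    {n : ℕ} (v : Fin (n+1) → L) (y : L) {i j : Fin (n+1)} (hij : i < j) :
    ∑ k : Fin (n+1), (tprod K (j.removeNth (Function.update (Function.update v k (b (v k) y)) i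
        (b (Function.update v k (b (v k) y) i) (Function.update v k (b (v k) y) j)))) : ⨂[K]^n L)
    = ∑ m : Fin n,
        tprod K (Function.update (j.removeNth (Function.update v i (b (v i) (v j)))) m
          (b (j.removeNth (Function.update v i (b (v i) (v j))) m) y)) := by
  have hne : i ≠ j := ne_of_lt hij
  have hlast : i ≠ Fin.last n := Fin.ne_last_of_lt hij
  set i' : Fin n := i.castPred hlast with hi'
  have hsa : j.succAbove i' = i := Fin.succAbove_castPred_of_lt j i hij
  set u : Fin (n+1) → L := Function.update v i (b (v i) (v j)) with hu
  set f : Fin (n+1) → ⨂[K]^n L := fun k =>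
    tprod K (j.removeNth (Function.update (Function.update v k (b (v k) y)) i
      (b (Function.update v k (b (v k) y) i) (Function.update v k (b (v k) y) j)))) with hf
  set g : Fin (n+1) → ⨂[K]^n L := fun k =>
    tprod K (j.removeNth (Function.update u k (b (u k) y))) with hg
  have hru : ∀ X : L, j.removeNth (Function.update v i X)
      = Function.update (j.removeNth v) i' X := by
    intro X
    have h := removeNth_update_succAbove j i' X v
    rwa [hsa] at h
  -- RHS as sum of g over succAbove
  have hRHS : (∑ m : Fin n,
        tprod K (Function.update (j.removeNth u) m (b (j.removeNth u m) y)) : ⨂[K]^n L)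
      = ∑ m : Fin n, g (j.succAbove m) := by
    refine Finset.sum_congr rfl fun m _ => ?_
    rw [hg]
    simp only []
    rw [removeNth_update_succAbove]
    rfl
  -- pointwise equality away from i and j
  have h1 : ∀ k, k ≠ i → k ≠ j → f k = g k := by
    intro k hki hkj
    rw [hf, hg]
    simp only []
    rw [Function.update_of_ne (Ne.symm hki), Function.update_of_ne (Ne.symm hkj),
      Function.update_comm hki, hu, Function.update_of_ne hki]
  -- the Leibniz identity case
  have hfij : f i + f j = g i := by
    rw [hf, hg]
    simp only []
    rw [Function.update_self, Function.update_of_ne hne, Function.update_idem,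
      Function.update_of_ne (Ne.symm hne), Function.update_self,
      Function.update_comm (Ne.symm hne), Fin.removeNth_update,
      hu, Function.update_idem, Function.update_self]
    rw [hru, hru, hru, hleib (v i) (v j) y]
    exact (MultilinearMap.map_update_add _ _ _ _ _).symm
  -- sum bookkeeping
  have hsub : ∑ k : Fin (n+1), (f k - g k) = (f i - g i) + (f j - g j) := by
    have : ∑ k : Fin (n+1), (f k - g k) = ∑ k ∈ ({i, j} : Finset (Fin (n+1))), (f k - g k) := by
      refine (Finset.sum_subset (Finset.subset_univ _) ?_).symm
      intro k _ hk
      simp only [Finset.mem_insert, Finset.mem_singleton, not_or] at hk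
      rw [h1 k hk.1 hk.2, sub_self]
    rw [this, Finset.sum_pair hne]
  have hdiff : ∑ k : Fin (n+1), f k - ∑ k : Fin (n+1), g k = -(g j) := by
    rw [← Finset.sum_sub_distrib, hsub, ← hfij]
    abel
  have hgsum : ∑ k : Fin (n+1), g k = g j + ∑ m : Fin n, g (j.succAbove m) :=
    Fin.sum_univ_succAbove g j
  rw [hRHS]
  rw [sub_eq_iff_eq_add] at hdiff
  rw [hdiff, hgsum]
  abel

/-- The adjoint action of a Leibniz algebra on its tensor powers,
`[g_1 ⊗ ⋯ ⊗ g_n, g] = Σ_i g_1 ⊗ ⋯ ⊗ [g_i,g] ⊗ ⋯ ⊗ g_n`, commutes with the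
Leibniz differential: `d [α, g] = [d α, g]`. -/
theorem leibniz_differential_equivariant_adjoint
    {K L : Type*} [Field K] [CharZero K] [AddCommGroup L] [Module K L]
    (b : L →ₗ[K] L →ₗ[K] L)
    (hleib : ∀ x y z : L, b (b x y) z = b (b x z) y + b x (b y z))
    (d : ∀ n : ℕ, (⨂[K]^(n+1) L) →ₗ[K] (⨂[K]^n L))
    (hd : ∀ (n : ℕ) (v : Fin (n+1) → L),
      d n (tprod K v) = ∑ j : Fin (n+1), ∑ i ∈ Finset.Iio j,
        ((-1 : K) ^ ((j : ℕ) + 1)) •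
          tprod K (j.removeNth (Function.update v i (b (v i) (v j)))))
    (ad : ∀ n : ℕ, L → ((⨂[K]^n L) →ₗ[K] (⨂[K]^n L)))
    (had : ∀ (n : ℕ) (y : L) (v : Fin n → L),
      ad n y (tprod K v) = ∑ i : Fin n, tprod K (Function.update v i (b (v i) y))) :
    ∀ (n : ℕ) (y : L), (d n) ∘ₗ (ad (n+1) y) = (ad n y) ∘ₗ (d n) := by
  intro n y
  apply PiTensorProduct.ext
  apply MultilinearMap.ext
  intro v
  simp only [LinearMap.compMultilinearMap_apply, LinearMap.coe_comp, Function.comp_apply]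
  rw [had, map_sum, hd, map_sum]
  simp only [hd, map_sum, map_smul, had]
  rw [Finset.sum_comm]
  refine Finset.sum_congr rfl fun j _ => ?_
  rw [Finset.sum_comm]
  refine Finset.sum_congr rfl fun i hi => ?_
  rw [← Finset.smul_sum]
  congr 1
  exact key_sum b hleib v y (Finset.mem_Iio.mp hi)
end

section
/- The tensor algebra T(V) with the half-shuffle product is the free Zinbiel algebra on V: any linear map f : V → A into a Zinbiel algebra A extends uniquely to a Zinbiel algebra morphism T(V) → A. -/
/-- The list of all shuffles (interleavings) of two words. -/
def shuffles {α : Type*} : List α → List α → List (List α)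
  | [], l2 => [l2]
  | l1, [] => [l1]
  | a :: as, b :: bs =>
      ((shuffles as (b :: bs)).map (a :: ·)) ++ ((shuffles (a :: as) bs).map (b :: ·))
  termination_by l1 l2 => l1.length + l2.length

/-- The word `v_1 ⋯ v_n` viewed inside the tensor algebra. -/
noncomputable def listProd (K : Type*) {V : Type*} [Field K] [AddCommGroup V]
    [Module K V] (l : List V) : TensorAlgebra K V :=
  (l.map (TensorAlgebra.ι K)).prod

section Aux

variable {K V A : Type*} [Field K] [AddCommGroup V] [Module K V]
  [AddCommGroup A] [Module K A]

/-- Right-nested Zinbiel product of the images of a word. -/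
def phiW (z : A →ₗ[K] A →ₗ[K] A) (f : V →ₗ[K] A) : List V → A
  | [] => 0
  | [a] => f a
  | a :: b :: l => z (f a) (phiW z f (b :: l))

lemma phiW_cons (z : A →ₗ[K] A →ₗ[K] A) (f : V →ₗ[K] A) (a : V) {l : List V}
    (h : l ≠ []) : phiW z f (a :: l) = z (f a) (phiW z f l) := by
  cases l with
  | nil => exact absurd rfl h
  | cons b l => rfl

lemma shuffles_length {α : Type*} :
    ∀ (l1 l2 : List α), ∀ w ∈ shuffles l1 l2, w.length = l1.length + l2.length := by
  intro l1 l2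
  induction l1, l2 using shuffles.induct with
  | case1 l2 => intro w hw; simp [shuffles] at hw; simp [hw]
  | case2 l1 h =>
    intro w hw
    cases l1 with
    | nil => exact absurd rfl h
    | cons a as => simp [shuffles] at hw; simp [hw]
  | case3 a as b bs ih1 ih2 =>
    intro w hw
    simp only [shuffles, List.mem_append, List.mem_map] at hw
    rcases hw with ⟨w', hw', rfl⟩ | ⟨w', hw', rfl⟩
    · simp [ih1 w' hw']; omega
    · simp [ih2 w' hw']; omega

lemma shuffles_ne_nil {α : Type*} {l1 l2 : List α} (h : l2 ≠ []) :
    ∀ w ∈ shuffles l1 l2, w ≠ [] := by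
  intro w hw hcon
  have := shuffles_length l1 l2 w hw
  rw [hcon] at this
  cases l2 with
  | nil => exact h rfl
  | cons b bs => simp at this

/-- Sum of `phiW` over all shuffles. -/
def Ssum (z : A →ₗ[K] A →ₗ[K] A) (f : V →ₗ[K] A) (l1 l2 : List V) : A :=
  ((shuffles l1 l2).map (phiW z f)).sum

lemma Ssum_nil_left (z : A →ₗ[K] A →ₗ[K] A) (f : V →ₗ[K] A) (l2 : List V) :
    Ssum z f [] l2 = phiW z f l2 := by
  simp [Ssum, shuffles]

lemma Ssum_nil_right (z : A →ₗ[K] A →ₗ[K] A) (f : V →ₗ[K] A) (a : V) (l1 : List V) :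
    Ssum z f (a :: l1) [] = phiW z f (a :: l1) := by
  simp [Ssum, shuffles]

lemma map_phiW_cons (z : A →ₗ[K] A →ₗ[K] A) (f : V →ₗ[K] A) (a : V)
    {l1 l2 : List V} (h : l2 ≠ []) :
    ((shuffles l1 l2).map (fun w => phiW z f (a :: w))).sum
      = z (f a) (Ssum z f l1 l2) := by
  have h1 : (shuffles l1 l2).map (fun w => phiW z f (a :: w))
      = (shuffles l1 l2).map (fun w => z (f a) (phiW z f w)) := by
    apply List.map_congr_left
    intro w hw
    exact phiW_cons z f a (shuffles_ne_nil h w hw)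
  rw [h1, Ssum, map_list_sum (z (f a)), List.map_map]
  rfl

lemma Ssum_cons_cons (z : A →ₗ[K] A →ₗ[K] A) (f : V →ₗ[K] A) (a b : V)
    (l1 l2 : List V) :
    Ssum z f (a :: l1) (b :: l2)
      = z (f a) (Ssum z f l1 (b :: l2)) + z (f b) (Ssum z f (a :: l1) l2) := by
  have key : Ssum z f (a :: l1) (b :: l2)
      = ((shuffles l1 (b :: l2)).map (fun w => phiW z f (a :: w))).sum
        + ((shuffles (a :: l1) l2).map (fun w => phiW z f (b :: w))).sum := by
    simp [Ssum, shuffles, List.map_map, Function.comp_def]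
  rw [key, map_phiW_cons z f a (by simp)]
  congr 1
  cases l2 with
  | nil =>
    have h1 : shuffles (a :: l1) ([] : List V) = [a :: l1] := by simp [shuffles]
    rw [h1, Ssum_nil_right]
    simp only [List.map_cons, List.map_nil, List.sum_cons, List.sum_nil, add_zero]
    exact phiW_cons z f b (by simp)
  | cons c cs => rw [map_phiW_cons z f b (by simp)]

lemma Ssum_eq (z : A →ₗ[K] A →ₗ[K] A)
    (hz : ∀ x y w : A, z (z x y) w = z x (z y w) + z x (z w y))
    (f : V →ₗ[K] A) :
    ∀ (n : ℕ) (l1 l2 : List V), l1.length + l2.length ≤ n → l1 ≠ [] → l2 ≠ [] →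
      Ssum z f l1 l2
        = z (phiW z f l1) (phiW z f l2) + z (phiW z f l2) (phiW z f l1) := by
  intro n
  induction n with
  | zero =>
    intro l1 l2 hn h1 _
    cases l1 with
    | nil => exact absurd rfl h1
    | cons a as => simp at hn
  | succ n ih =>
    intro l1 l2 hn h1 h2
    obtain ⟨a, l1', rfl⟩ := List.exists_cons_of_ne_nil h1
    obtain ⟨b, l2', rfl⟩ := List.exists_cons_of_ne_nil h2
    rw [Ssum_cons_cons]
    have hpa : phiW z f [a] = f a := rfl
    have hpb : phiW z f [b] = f b := rfl
    cases l1' with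
    | nil =>
      rw [Ssum_nil_left]
      cases l2' with
      | nil =>
        rw [Ssum_nil_right, hpa, hpb]
      | cons c cs =>
        rw [ih [a] (c :: cs) (by simp at hn ⊢; omega) (by simp) (by simp)]
        rw [hpa, phiW_cons z f b (l := c :: cs) (by simp)]
        rw [hz (f b) (phiW z f (c :: cs)) (f a)]
        simp only [map_add]
        try abel
    | cons c cs =>
      cases l2' with
      | nil =>
        rw [Ssum_nil_right, ih (c :: cs) [b] (by simp at hn ⊢; omega) (by simp) (by simp)]
        rw [hpb, phiW_cons z f a (l := c :: cs) (by simp)]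
        rw [hz (f a) (phiW z f (c :: cs)) (f b)]
        simp only [map_add]
        try abel
      | cons d ds =>
        rw [ih (c :: cs) (b :: d :: ds) (by simp at hn ⊢; omega) (by simp) (by simp)]
        rw [ih (a :: c :: cs) (d :: ds) (by simp at hn ⊢; omega) (by simp) (by simp)]
        rw [phiW_cons z f a (l := c :: cs) (by simp),
          phiW_cons z f b (l := d :: ds) (by simp)]
        rw [hz (f a) (phiW z f (c :: cs)) (z (f b) (phiW z f (d :: ds)))]
        rw [hz (f b) (phiW z f (d :: ds)) (z (f a) (phiW z f (c :: cs)))]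
        simp only [map_add]
        abel

/-- The left-multiplication operator on `K × A` used to build the extension. -/
noncomputable def Lop (z : A →ₗ[K] A →ₗ[K] A) (f : V →ₗ[K] A) :
    V →ₗ[K] Module.End K (K × A) where
  toFun v :=
    { toFun := fun p => (0, p.1 • f v + z (f v) p.2)
      map_add' := by
        intro p q
        simp [Prod.ext_iff, add_smul]
        abel
      map_smul' := by
        intro c p
        simp [Prod.ext_iff, mul_smul, smul_add] }
  map_add' := by
    intro v w
    apply LinearMap.ext
    intro p
    simp [Prod.ext_iff, smul_add]
    abel
  map_smul' := by
    intro c v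
    apply LinearMap.ext
    intro p
    simp [Prod.ext_iff, smul_add, smul_comm c p.1]

/-- The linear extension of `f` to the tensor algebra. -/
noncomputable def gmap (z : A →ₗ[K] A →ₗ[K] A) (f : V →ₗ[K] A) :
    TensorAlgebra K V →ₗ[K] A :=
  (LinearMap.snd K K A) ∘ₗ (LinearMap.applyₗ ((1 : K), (0 : A))) ∘ₗ
    (TensorAlgebra.lift K (Lop z f)).toLinearMap

lemma lift_listProd (z : A →ₗ[K] A →ₗ[K] A) (f : V →ₗ[K] A) :
    ∀ (l : List V), l ≠ [] →
      (TensorAlgebra.lift K (Lop z f)) (listProd K l) ((1 : K), (0 : A))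
        = (0, phiW z f l) := by
  intro l
  induction l with
  | nil => intro h; exact absurd rfl h
  | cons a l ih =>
    intro _
    cases l with
    | nil =>
      have : listProd K [a] = TensorAlgebra.ι K a := by simp [listProd]
      rw [this, TensorAlgebra.lift_ι_apply]
      show ((0 : K), (1 : K) • f a + z (f a) (0 : A)) = (0, phiW z f [a])
      simp
      rfl
    | cons b l' =>
      have : listProd K (a :: b :: l')
          = TensorAlgebra.ι K a * listProd K (b :: l') := by
        simp [listProd]
      rw [this, map_mul, Module.End.mul_apply, ih (by simp),
        TensorAlgebra.lift_ι_apply]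
      show ((0 : K), (0 : K) • f a + z (f a) (phiW z f (b :: l'))) = _
      simp
      exact (phiW_cons z f a (by simp)).symm

lemma gmap_listProd (z : A →ₗ[K] A →ₗ[K] A) (f : V →ₗ[K] A) (l : List V)
    (h : l ≠ []) : gmap z f (listProd K l) = phiW z f l := by
  show ((TensorAlgebra.lift K (Lop z f)) (listProd K l) ((1 : K), (0 : A))).2 = _
  rw [lift_listProd z f l h]

lemma gmap_ι (z : A →ₗ[K] A →ₗ[K] A) (f : V →ₗ[K] A) (v : V) :
    gmap z f (TensorAlgebra.ι K v) = f v := by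
  have := gmap_listProd z f [v] (by simp)
  simpa [listProd, phiW] using this

end Aux

/-- The (reduced) tensor module with the half-shuffle product is the free
Zinbiel algebra on `V`: any linear map `f : V → A` to a Zinbiel algebra `A`
extends uniquely to a Zinbiel morphism. -/
theorem tensor_module_free_zinbiel
    {K V A : Type*} [Field K] [AddCommGroup V] [Module K V]
    [AddCommGroup A] [Module K A]
    (prec : TensorAlgebra K V →ₗ[K] TensorAlgebra K V →ₗ[K] TensorAlgebra K V)
    (hprec : ∀ (a : V) (l1 l2 : List V), l2 ≠ [] →
      prec (listProd K (a :: l1)) (listProd K l2)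
        = ((shuffles l1 l2).map (fun w => listProd K (a :: w))).sum)
    (z : A →ₗ[K] A →ₗ[K] A)
    (hz : ∀ x y w : A, z (z x y) w = z x (z y w) + z x (z w y))
    (f : V →ₗ[K] A) :
    let Tplus : Submodule K (TensorAlgebra K V) :=
      Submodule.span K {x : TensorAlgebra K V | ∃ l : List V, l ≠ [] ∧ x = listProd K l}
    ∃ g : TensorAlgebra K V →ₗ[K] A,
      ((∀ v : V, g (TensorAlgebra.ι K v) = f v) ∧
        (∀ x ∈ Tplus, ∀ y ∈ Tplus, g (prec x y) = z (g x) (g y))) ∧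
      (∀ g' : TensorAlgebra K V →ₗ[K] A,
        (∀ v : V, g' (TensorAlgebra.ι K v) = f v) →
        (∀ x ∈ Tplus, ∀ y ∈ Tplus, g' (prec x y) = z (g' x) (g' y)) →
        ∀ x ∈ Tplus, g' x = g x) := by
  intro Tplus
  set S : Set (TensorAlgebra K V) :=
    {x : TensorAlgebra K V | ∃ l : List V, l ≠ [] ∧ x = listProd K l} with hS
  have hTplus : Tplus = Submodule.span K S := rfl
  have hmem : ∀ (l : List V), l ≠ [] → listProd K l ∈ Tplus := by
    intro l h
    exact Submodule.subset_span ⟨l, h, rfl⟩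
  set g := gmap z f with hg
  -- key: the word case of the morphism property
  have hword : ∀ (l1 l2 : List V), l1 ≠ [] → l2 ≠ [] →
      g (prec (listProd K l1) (listProd K l2))
        = z (g (listProd K l1)) (g (listProd K l2)) := by
    intro l1 l2 h1 h2
    obtain ⟨a, l1', rfl⟩ := List.exists_cons_of_ne_nil h1
    rw [hprec a l1' l2 h2, gmap_listProd z f _ (by simp), gmap_listProd z f _ h2]
    rw [map_list_sum g, List.map_map]
    have h3 : (shuffles l1' l2).map (g ∘ fun w => listProd K (a :: w))
        = (shuffles l1' l2).map (fun w => phiW z f (a :: w)) := by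
      apply List.map_congr_left
      intro w _
      exact gmap_listProd z f (a :: w) (by simp)
    rw [h3, map_phiW_cons z f a h2]
    cases l1' with
    | nil =>
      rw [Ssum_nil_left]
      rfl
    | cons c cs =>
      rw [Ssum_eq z hz f ((c :: cs).length + l2.length) (c :: cs) l2 le_rfl
        (by simp) h2]
      rw [phiW_cons z f a (l := c :: cs) (by simp)]
      rw [hz (f a) (phiW z f (c :: cs)) (phiW z f l2), ← map_add]
  -- the morphism property on the span
  have hmor : ∀ x ∈ Tplus, ∀ y ∈ Tplus, g (prec x y) = z (g x) (g y) := by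
    intro x hx
    rw [hTplus] at hx
    induction hx using Submodule.span_induction with
    | mem x hxS =>
      intro y hy
      rw [hTplus] at hy
      induction hy using Submodule.span_induction with
      | mem y hyS =>
        obtain ⟨l1, h1, rfl⟩ := hxS
        obtain ⟨l2, h2, rfl⟩ := hyS
        exact hword l1 l2 h1 h2
      | zero => simp
      | add y1 y2 hy1 hy2 ih1 ih2 => simp [map_add, ih1, ih2]
      | smul c y hy ih => simp [map_smul, ih]
    | zero => intro y hy; simp
    | add x1 x2 hx1 hx2 ih1 ih2 =>
      intro y hy
      have e1 := ih1 y hy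
      have e2 := ih2 y hy
      simp only [map_add, LinearMap.add_apply] at *
      rw [e1, e2]
    | smul c x hx ih =>
      intro y hy
      have e := ih y hy
      simp only [map_smul, LinearMap.smul_apply] at *
      rw [e]
  refine ⟨g, ⟨fun v => gmap_ι z f v, hmor⟩, ?_⟩
  -- uniqueness
  intro g' hι' hmor'
  have hword' : ∀ (l : List V), l ≠ [] → g' (listProd K l) = phiW z f l := by
    intro l
    induction l with
    | nil => intro h; exact absurd rfl h
    | cons a l ih =>
      intro _
      cases l with
      | nil =>
        have : listProd K [a] = TensorAlgebra.ι K a := by simp [listProd]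
        rw [this, hι' a]
        rfl
      | cons b l' =>
        have hx : prec (listProd K [a]) (listProd K (b :: l'))
            = listProd K (a :: b :: l') := by
          rw [hprec a [] (b :: l') (by simp)]
          simp [shuffles]
        rw [← hx, hmor' _ (hmem [a] (by simp)) _ (hmem (b :: l') (by simp))]
        rw [ih (by simp)]
        have ha : g' (listProd K [a]) = f a := by
          have : listProd K [a] = TensorAlgebra.ι K a := by simp [listProd]
          rw [this, hι' a]
        rw [ha, ← phiW_cons z f a (l := b :: l') (by simp)]
  intro x hx
  rw [hTplus] at hx
  induction hx using Submodule.span_induction with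
  | mem x hxS =>
    obtain ⟨l, hl, rfl⟩ := hxS
    rw [hword' l hl, gmap_listProd z f l hl]
  | zero => simp
  | add x1 x2 hx1 hx2 ih1 ih2 => simp [map_add, ih1, ih2]
  | smul c x hx ih => simp [map_smul, ih]
end

section
/- The tensor coalgebra T(V) with deconcatenation coproduct is the cofree connected coassociative coalgebra on V: for any connected coaugmented coassociative coalgebra C and any linear map Φ : C → V with Φ(1) = 0, there is a unique coalgebra morphism Φ̃ : C → T(V) with p ∘ Φ̃ = Φ, where p : T(V) → V is the projection. -/
open scoped TensorProduct

/-- The coradical filtration of a coaugmented coalgebra `(C, Δ, 1 = u)`: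
`F_0 = K·u` and `F_r = {x | Δ̄(x) ∈ F_{r-1} ⊗ F_{r-1}}`,
where `Δ̄(x) = Δ(x) − u ⊗ x − x ⊗ u`. -/
noncomputable def coradFiltration {K C : Type*} [Field K] [AddCommGroup C] [Module K C]
    (Δ : C →ₗ[K] C ⊗[K] C) (u : C) : ℕ → Submodule K C
  | 0 => Submodule.span K {u}
  | r + 1 =>
      Submodule.comap (Δ - TensorProduct.mk K C C u - (TensorProduct.mk K C C).flip u)
        (LinearMap.range (TensorProduct.map
          (coradFiltration Δ u r).subtype (coradFiltration Δ u r).subtype))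

namespace TCF

variable {K V C : Type*} [Field K] [AddCommGroup V] [Module K V]
  [AddCommGroup C] [Module K C]

/-- reduced coproduct (on the whole C). -/
noncomputable def Db (Δ : C →ₗ[K] C ⊗[K] C) (u : C) : C →ₗ[K] C ⊗[K] C :=
  Δ - TensorProduct.mk K C C u - (TensorProduct.mk K C C).flip u

/-- projection onto the augmentation ideal. -/
noncomputable def pib (ε : C →ₗ[K] K) (u : C) : C →ₗ[K] C :=
  LinearMap.id - ε.smulRight u

lemma Db_apply (Δ : C →ₗ[K] C ⊗[K] C) (u x : C) :
    Db Δ u x = Δ x - u ⊗ₜ[K] x - x ⊗ₜ[K] u := rfl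

lemma pib_apply (ε : C →ₗ[K] K) (u x : C) : pib ε u x = x - ε x • u := rfl

lemma coradFiltration_succ (Δ : C →ₗ[K] C ⊗[K] C) (u : C) (r : ℕ) :
    coradFiltration Δ u (r + 1)
      = Submodule.comap (Db Δ u)
        (LinearMap.range (TensorProduct.map
          (coradFiltration Δ u r).subtype (coradFiltration Δ u r).subtype)) := rfl

lemma listProd_nil : listProd K ([] : List V) = 1 := rfl

lemma listProd_cons (v : V) (l : List V) :
    listProd K (v :: l) = TensorAlgebra.ι K v * listProd K l := by
  simp [listProd]

lemma listProd_append (l l' : List V) :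
    listProd K (l ++ l') = listProd K l * listProd K l' := by
  simp [listProd]

/-- span of words of length n -/
noncomputable def W (K : Type*) (V : Type*) [Field K] [AddCommGroup V] [Module K V]
    (n : ℕ) : Submodule K (TensorAlgebra K V) :=
  Submodule.span K {x | ∃ l : List V, l.length = n ∧ listProd K l = x}

lemma one_mem_W : (1 : TensorAlgebra K V) ∈ W K V 0 :=
  Submodule.subset_span ⟨[], rfl, rfl⟩

lemma ι_mul_mem_W {n : ℕ} {w : TensorAlgebra K V} (hw : w ∈ W K V n) (v : V) :
    TensorAlgebra.ι K v * w ∈ W K V (n + 1) := by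
  induction hw using Submodule.span_induction with
  | mem x hx =>
      obtain ⟨l, hl, rfl⟩ := hx
      exact Submodule.subset_span ⟨v :: l, by simp [hl], (listProd_cons v l).symm⟩
  | zero => simp
  | add x y hx hy ihx ihy => rw [mul_add]; exact add_mem ihx ihy
  | smul a x hx ih => rw [mul_smul_comm]; exact Submodule.smul_mem _ _ ih

lemma span_words_top :
    Submodule.span K {x : TensorAlgebra K V | ∃ l : List V, listProd K l = x} = ⊤ := by
  rw [Submodule.eq_top_iff']
  intro a
  induction a using TensorAlgebra.induction with
  | algebraMap r =>
      rw [Algebra.algebraMap_eq_smul_one]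
      exact Submodule.smul_mem _ _ (Submodule.subset_span ⟨[], rfl⟩)
  | ι v => exact Submodule.subset_span ⟨[v], by simp [listProd]⟩
  | mul a b ha hb =>
      induction ha using Submodule.span_induction with
      | mem x hx =>
          obtain ⟨l, rfl⟩ := hx
          induction hb using Submodule.span_induction with
          | mem y hy =>
              obtain ⟨l', rfl⟩ := hy
              exact Submodule.subset_span ⟨l ++ l', listProd_append l l'⟩
          | zero => simp
          | add y z _ _ ihy ihz => rw [mul_add]; exact add_mem ihy ihz
          | smul a y _ ih => rw [mul_smul_comm]; exact Submodule.smul_mem _ _ ih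
      | zero => simp
      | add x y _ _ ihx ihy => rw [add_mul]; exact add_mem ihx ihy
      | smul a x _ ih => rw [smul_mul_assoc]; exact Submodule.smul_mem _ _ ih
  | add a b ha hb => exact add_mem ha hb


/-- the homogeneous components of the cofree extension -/
noncomputable def P (Δ : C →ₗ[K] C ⊗[K] C) (ε : C →ₗ[K] K) (u : C) (Φ : C →ₗ[K] V) :
    ℕ → C →ₗ[K] TensorAlgebra K V
  | 0 => ε.smulRight 1
  | 1 => TensorAlgebra.ι K ∘ₗ Φ
  | (n+2) => LinearMap.mul' K (TensorAlgebra K V) ∘ₗ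
      TensorProduct.map (TensorAlgebra.ι K ∘ₗ Φ) (P Δ ε u Φ (n+1)) ∘ₗ
      (Db Δ u ∘ₗ pib ε u)

noncomputable def M (Δ : C →ₗ[K] C ⊗[K] C) (ε : C →ₗ[K] K) (u : C) (Φ : C →ₗ[K] V)
    (p : ℕ) : C ⊗[K] C →ₗ[K] TensorAlgebra K V :=
  LinearMap.mul' K (TensorAlgebra K V) ∘ₗ
    TensorProduct.map (TensorAlgebra.ι K ∘ₗ Φ) (P Δ ε u Φ p)

lemma M_tmul (Δ : C →ₗ[K] C ⊗[K] C) (ε : C →ₗ[K] K) (u : C) (Φ : C →ₗ[K] V)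
    (p : ℕ) (a b : C) :
    M Δ ε u Φ p (a ⊗ₜ[K] b) = TensorAlgebra.ι K (Φ a) * P Δ ε u Φ p b := by
  simp [M, LinearMap.mul'_apply]

lemma P_zero_apply (Δ : C →ₗ[K] C ⊗[K] C) (ε : C →ₗ[K] K) (u : C) (Φ : C →ₗ[K] V)
    (x : C) : P Δ ε u Φ 0 x = ε x • 1 := rfl

lemma P_one_apply (Δ : C →ₗ[K] C ⊗[K] C) (ε : C →ₗ[K] K) (u : C) (Φ : C →ₗ[K] V)
    (x : C) : P Δ ε u Φ 1 x = TensorAlgebra.ι K (Φ x) := rfl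

lemma P_succ_succ (Δ : C →ₗ[K] C ⊗[K] C) (ε : C →ₗ[K] K) (u : C) (Φ : C →ₗ[K] V)
    (n : ℕ) (x : C) :
    P Δ ε u Φ (n+2) x = M Δ ε u Φ (n+1) (Db Δ u (pib ε u x)) := rfl

variable {Δ : C →ₗ[K] C ⊗[K] C} {ε : C →ₗ[K] K} {u : C} {Φ : C →ₗ[K] V}

lemma pib_u (hε : ε u = 1) : pib ε u u = 0 := by
  simp [pib_apply, hε]

lemma Db_u (huΔ : Δ u = u ⊗ₜ[K] u) : Db Δ u u = - (u ⊗ₜ[K] u) := by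
  rw [Db_apply, huΔ]; abel

lemma Db_pib (huΔ : Δ u = u ⊗ₜ[K] u) (x : C) :
    Db Δ u (pib ε u x) = Db Δ u x + ε x • (u ⊗ₜ[K] u) := by
  rw [pib_apply, map_sub, map_smul, Db_u huΔ, smul_neg, sub_neg_eq_add]

lemma Delta_decomp (huΔ : Δ u = u ⊗ₜ[K] u) (x : C) :
    Δ x = Db Δ u (pib ε u x) + u ⊗ₜ[K] x + x ⊗ₜ[K] u - ε x • (u ⊗ₜ[K] u) := by
  rw [Db_pib huΔ, Db_apply]
  abel

lemma P_u (hε : ε u = 1) (hΦ : Φ u = 0) :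
    ∀ n : ℕ, 1 ≤ n → P Δ ε u Φ n u = 0
  | 1, _ => by simp [P_one_apply, hΦ]
  | (n+2), _ => by rw [P_succ_succ, pib_u hε]; simp

lemma P_u_zero (hε : ε u = 1) : P Δ ε u Φ 0 u = 1 := by
  simp [P_zero_apply, hε]


lemma P_mem_W : ∀ (n : ℕ) (x : C), P Δ ε u Φ n x ∈ W K V n
  | 0, x => by
      rw [P_zero_apply]
      exact Submodule.smul_mem _ _ one_mem_W
  | 1, x => by
      rw [P_one_apply]
      exact Submodule.subset_span ⟨[Φ x], rfl, by simp [listProd]⟩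
  | (n+2), x => by
      rw [P_succ_succ]
      generalize Db Δ u (pib ε u x) = t
      induction t using TensorProduct.induction_on with
      | zero => simp
      | tmul a b =>
          rw [M_tmul]
          exact ι_mul_mem_W (P_mem_W (n+1) b) (Φ a)
      | add s t hs ht => rw [map_add]; exact add_mem hs ht

lemma u_mem_F (huΔ : Δ u = u ⊗ₜ[K] u) : ∀ r : ℕ, u ∈ coradFiltration Δ u r
  | 0 => Submodule.mem_span_singleton_self u
  | (r+1) => by
      rw [coradFiltration_succ, Submodule.mem_comap, Db_u huΔ]
      exact ⟨(-⟨u, u_mem_F huΔ r⟩ : coradFiltration Δ u r) ⊗ₜ[K] ⟨u, u_mem_F huΔ r⟩, by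
        simp [TensorProduct.neg_tmul]⟩

lemma range_map_mono {F G : Submodule K C} (h : F ≤ G) :
    LinearMap.range (TensorProduct.map F.subtype F.subtype)
      ≤ LinearMap.range (TensorProduct.map G.subtype G.subtype) := by
  have : TensorProduct.map F.subtype F.subtype
      = TensorProduct.map G.subtype G.subtype ∘ₗ
        TensorProduct.map (Submodule.inclusion h) (Submodule.inclusion h) := by
    rw [← TensorProduct.map_comp]
    rfl
  rw [this]
  exact LinearMap.range_comp_le_range _ _

lemma F_mono (huΔ : Δ u = u ⊗ₜ[K] u) :
    ∀ r : ℕ, coradFiltration Δ u r ≤ coradFiltration Δ u (r+1)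
  | 0 => by
      intro x hx
      obtain ⟨a, rfl⟩ := Submodule.mem_span_singleton.mp hx
      rw [coradFiltration_succ, Submodule.mem_comap, map_smul, Db_u huΔ]
      refine ⟨a • ((-⟨u, Submodule.mem_span_singleton_self u⟩ :
        coradFiltration Δ u 0) ⊗ₜ[K] ⟨u, Submodule.mem_span_singleton_self u⟩), ?_⟩
      simp [TensorProduct.neg_tmul]
  | (r+1) => by
      intro x hx
      rw [coradFiltration_succ, Submodule.mem_comap] at hx ⊢
      exact range_map_mono (F_mono huΔ r) hx

lemma F_le (huΔ : Δ u = u ⊗ₜ[K] u) {r s : ℕ} (h : r ≤ s) :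
    coradFiltration Δ u r ≤ coradFiltration Δ u s := by
  induction h with
  | refl => exact le_rfl
  | step h ih => exact le_trans ih (F_mono huΔ _)

lemma P_vanish (hε : ε u = 1) (hΦ : Φ u = 0) (huΔ : Δ u = u ⊗ₜ[K] u) :
    ∀ (r : ℕ) (x : C), x ∈ coradFiltration Δ u r → ∀ n : ℕ, r < n → P Δ ε u Φ n x = 0
  | 0, x, hx, n, hn => by
      obtain ⟨a, rfl⟩ := Submodule.mem_span_singleton.mp hx
      rw [map_smul, P_u hε hΦ n hn, smul_zero]
  | (r+1), x, hx, n, hn => by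
      rw [coradFiltration_succ, Submodule.mem_comap] at hx
      obtain ⟨t, ht⟩ := hx
      obtain ⟨m, rfl⟩ : ∃ m, n = m + 2 := by
        refine ⟨n - 2, by omega⟩
      rw [P_succ_succ, Db_pib huΔ, ← ht, map_add, map_smul]
      have h1 : M Δ ε u Φ (m+1) (u ⊗ₜ[K] u) = 0 := by
        rw [M_tmul, hΦ]; simp
      have h2 : ∀ t' : (coradFiltration Δ u r) ⊗[K] (coradFiltration Δ u r),
          M Δ ε u Φ (m+1)
          ((TensorProduct.map (coradFiltration Δ u r).subtype
            (coradFiltration Δ u r).subtype) t') = 0 := by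
        intro t'
        induction t' using TensorProduct.induction_on with
        | zero => simp
        | tmul a b =>
            rw [TensorProduct.map_tmul, M_tmul]
            simp only [Submodule.subtype_apply]
            rw [P_vanish hε hΦ huΔ r b.1 b.2 (m+1) (by omega), mul_zero]
        | add s t hs ht => rw [map_add, map_add, hs, ht, add_zero]
      rw [h1, h2, smul_zero, add_zero]


section Taux
variable (ΔT : TensorAlgebra K V →ₗ[K] TensorAlgebra K V ⊗[K] TensorAlgebra K V)
variable (εT : TensorAlgebra K V →ₗ[K] K) (proj : TensorAlgebra K V →ₗ[K] V)

lemma epsT_W (hεT : ∀ l : List V, l ≠ [] → εT (listProd K l) = 0)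
    {n : ℕ} (hn : 1 ≤ n) {w : TensorAlgebra K V} (hw : w ∈ W K V n) : εT w = 0 := by
  induction hw using Submodule.span_induction with
  | mem x hx =>
      obtain ⟨l, hl, rfl⟩ := hx
      exact hεT l (by rintro rfl; simp at hl; omega)
  | zero => simp
  | add x y hx hy ihx ihy => rw [map_add, ihx, ihy, add_zero]
  | smul a x hx ih => rw [map_smul, ih, smul_zero]

lemma proj_W (hproj : ∀ l : List V, 2 ≤ l.length → proj (listProd K l) = 0)
    {n : ℕ} (hn : 2 ≤ n) {w : TensorAlgebra K V} (hw : w ∈ W K V n) : proj w = 0 := by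
  induction hw using Submodule.span_induction with
  | mem x hx =>
      obtain ⟨l, hl, rfl⟩ := hx
      exact hproj l (by omega)
  | zero => simp
  | add x y hx hy ihx ihy => rw [map_add, ihx, ihy, add_zero]
  | smul a x hx ih => rw [map_smul, ih, smul_zero]

lemma DeltaT_one
    (hΔT : ∀ l : List V, ΔT (listProd K l) = ∑ p ∈ Finset.range (l.length + 1),
        listProd K (l.take p) ⊗ₜ[K] listProd K (l.drop p)) :
    ΔT 1 = (1 : TensorAlgebra K V) ⊗ₜ[K] 1 := by
  have := hΔT ([] : List V)
  simpa [listProd_nil] using this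

lemma DeltaT_iota
    (hΔT : ∀ l : List V, ΔT (listProd K l) = ∑ p ∈ Finset.range (l.length + 1),
        listProd K (l.take p) ⊗ₜ[K] listProd K (l.drop p)) (v : V) :
    ΔT (TensorAlgebra.ι K v)
      = 1 ⊗ₜ[K] TensorAlgebra.ι K v + TensorAlgebra.ι K v ⊗ₜ[K] 1 := by
  have := hΔT [v]
  simpa [listProd_nil, listProd_cons, Finset.sum_range_succ] using this

/-- deconcatenation on `ι v * w` for `w` a combination of words. -/
lemma DeltaT_mul
    (hΔT : ∀ l : List V, ΔT (listProd K l) = ∑ p ∈ Finset.range (l.length + 1),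
        listProd K (l.take p) ⊗ₜ[K] listProd K (l.drop p))
    {n : ℕ} {w : TensorAlgebra K V} (hw : w ∈ W K V n) (v : V) :
    ΔT (TensorAlgebra.ι K v * w)
      = 1 ⊗ₜ[K] (TensorAlgebra.ι K v * w)
        + (TensorProduct.map (LinearMap.mulLeft K (TensorAlgebra.ι K v))
            LinearMap.id) (ΔT w) := by
  induction hw using Submodule.span_induction with
  | mem x hx =>
      obtain ⟨l, hl, rfl⟩ := hx
      rw [← listProd_cons, hΔT (v :: l), hΔT l]
      rw [List.length_cons, Finset.sum_range_succ' _ (l.length + 1)]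
      simp only [List.take_succ_cons, List.drop_succ_cons, List.take_zero,
        List.drop_zero, listProd_nil, listProd_cons, map_sum,
        TensorProduct.map_tmul, LinearMap.mulLeft_apply, LinearMap.id_coe, id_eq]
      rw [add_comm]
  | zero => simp
  | add x y hx hy ihx ihy =>
      rw [mul_add, map_add, ihx, ihy, map_add, map_add, TensorProduct.tmul_add]
      abel
  | smul a x hx ih =>
      rw [mul_smul_comm, map_smul, ih, map_smul, map_smul, TensorProduct.tmul_smul,
        smul_add]

end Taux

section Counit
variable {T' : Type*} [AddCommGroup T'] [Module K T']

lemma smulRight_map_aux (f : C →ₗ[K] T') (t0 : T') (t : C ⊗[K] C) :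
    TensorProduct.map (ε.smulRight t0) f t
      = t0 ⊗ₜ[K] f ((TensorProduct.lid K C)
          ((TensorProduct.map ε LinearMap.id) t)) := by
  induction t using TensorProduct.induction_on with
  | zero => simp
  | tmul a b =>
      simp only [TensorProduct.map_tmul, LinearMap.smulRight_apply, LinearMap.id_coe,
        id_eq, TensorProduct.lid_tmul, map_smul, TensorProduct.tmul_smul,
        TensorProduct.smul_tmul']
  | add s t hs ht => rw [map_add, hs, ht, map_add, map_add, map_add, TensorProduct.tmul_add]

lemma map_smulRight_aux (f : C →ₗ[K] T') (t0 : T') (t : C ⊗[K] C) :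
    TensorProduct.map f (ε.smulRight t0) t
      = f ((TensorProduct.rid K C)
          ((TensorProduct.map LinearMap.id ε) t)) ⊗ₜ[K] t0 := by
  induction t using TensorProduct.induction_on with
  | zero => simp
  | tmul a b =>
      simp only [TensorProduct.map_tmul, LinearMap.smulRight_apply, LinearMap.id_coe,
        id_eq, TensorProduct.rid_tmul, map_smul, TensorProduct.tmul_smul,
        TensorProduct.smul_tmul']
  | add s t hs ht => rw [map_add, hs, ht, map_add, map_add, map_add, TensorProduct.add_tmul]

lemma counit_left
    (hcounitl : ∀ x : C,
      (TensorProduct.lid K C) ((TensorProduct.map ε LinearMap.id) (Δ x)) = x)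
    (f : C →ₗ[K] T') (t0 : T') (x : C) :
    TensorProduct.map (ε.smulRight t0) f (Δ x) = t0 ⊗ₜ[K] f x := by
  rw [smulRight_map_aux, hcounitl]

lemma counit_right
    (hcounitr : ∀ x : C,
      (TensorProduct.rid K C) ((TensorProduct.map LinearMap.id ε) (Δ x)) = x)
    (f : C →ₗ[K] T') (t0 : T') (x : C) :
    TensorProduct.map f (ε.smulRight t0) (Δ x) = f x ⊗ₜ[K] t0 := by
  rw [map_smulRight_aux, hcounitr]

end Counit


section Key

variable (ΔT : TensorAlgebra K V →ₗ[K] TensorAlgebra K V ⊗[K] TensorAlgebra K V)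

lemma Db_pib_expand (huΔ : Δ u = u ⊗ₜ[K] u) (x : C) :
    Db Δ u (pib ε u x) = Δ x - u ⊗ₜ[K] x - x ⊗ₜ[K] u + ε x • (u ⊗ₜ[K] u) := by
  rw [Db_pib huΔ, Db_apply]

lemma M_Delta
    (hcounitr : ∀ x : C,
      (TensorProduct.rid K C) ((TensorProduct.map LinearMap.id ε) (Δ x)) = x)
    (huΔ : Δ u = u ⊗ₜ[K] u) (hε : ε u = 1) (hΦ : Φ u = 0) (p : ℕ) (y : C) :
    M Δ ε u Φ p (Δ y) = P Δ ε u Φ (p+1) y := by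
  match p with
  | 0 =>
      have : M Δ ε u Φ 0 (Δ y)
          = LinearMap.mul' K (TensorAlgebra K V)
            (TensorProduct.map (TensorAlgebra.ι K ∘ₗ Φ) (ε.smulRight 1) (Δ y)) := rfl
      rw [this, counit_right hcounitr, LinearMap.mul'_apply, mul_one]
      rfl
  | (p+1) =>
      rw [Delta_decomp (ε := ε) huΔ y, map_sub, map_add, map_add, map_smul]
      rw [M_tmul, M_tmul, hΦ, map_zero, zero_mul,
        P_u hε hΦ (p+1) (Nat.le_add_left 1 p), mul_zero, M_tmul, hΦ, map_zero, zero_mul]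
      simp only [add_zero, smul_zero, sub_zero]
      rfl

lemma M_Delta_comp
    (hcounitr : ∀ x : C,
      (TensorProduct.rid K C) ((TensorProduct.map LinearMap.id ε) (Δ x)) = x)
    (huΔ : Δ u = u ⊗ₜ[K] u) (hε : ε u = 1) (hΦ : Φ u = 0) (p : ℕ) :
    M Δ ε u Φ p ∘ₗ Δ = P Δ ε u Φ (p+1) :=
  LinearMap.ext fun y => M_Delta hcounitr huΔ hε hΦ p y

lemma mulLeft_assoc_aux (p q : ℕ) (a : C) (s : C ⊗[K] C) :
    TensorProduct.map (LinearMap.mulLeft K (TensorAlgebra.ι K (Φ a))) LinearMap.id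
        (TensorProduct.map (P Δ ε u Φ p) (P Δ ε u Φ q) s)
      = TensorProduct.map (M Δ ε u Φ p) (P Δ ε u Φ q)
          ((TensorProduct.assoc K C C C).symm (a ⊗ₜ[K] s)) := by
  induction s using TensorProduct.induction_on with
  | zero => simp
  | tmul b₁ b₂ =>
      rw [TensorProduct.assoc_symm_tmul, TensorProduct.map_tmul, TensorProduct.map_tmul,
        TensorProduct.map_tmul, M_tmul]
      rfl
  | add s t hs ht =>
      rw [map_add, map_add, hs, ht, TensorProduct.tmul_add, map_add, map_add]

lemma DeltaT_M
    (hΔT : ∀ l : List V, ΔT (listProd K l) = ∑ p ∈ Finset.range (l.length + 1),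
        listProd K (l.take p) ⊗ₜ[K] listProd K (l.drop p))
    (n : ℕ)
    (IH : ∀ y : C, ΔT (P Δ ε u Φ n y)
      = ∑ p ∈ Finset.range (n+1),
          TensorProduct.map (P Δ ε u Φ p) (P Δ ε u Φ (n-p)) (Δ y))
    (t : C ⊗[K] C) :
    ΔT (M Δ ε u Φ n t)
      = (1 : TensorAlgebra K V) ⊗ₜ[K] M Δ ε u Φ n t
        + ∑ p ∈ Finset.range (n+1),
            TensorProduct.map (M Δ ε u Φ p) (P Δ ε u Φ (n-p))
              ((TensorProduct.assoc K C C C).symm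
                ((TensorProduct.map LinearMap.id Δ) t)) := by
  induction t using TensorProduct.induction_on with
  | zero => simp
  | tmul a b =>
      rw [M_tmul, DeltaT_mul ΔT hΔT (P_mem_W n b) (Φ a), IH b, map_sum]
      congr 1
      refine Finset.sum_congr rfl fun p _ => ?_
      rw [mulLeft_assoc_aux]
      simp only [TensorProduct.map_tmul, LinearMap.id_coe, id_eq]
  | add s t hs ht =>
      rw [map_add, map_add, hs, ht, map_add, map_add, TensorProduct.tmul_add]
      simp only [map_add]
      rw [Finset.sum_add_distrib]
      abel

end Key


section KeyDelta

variable (ΔT : TensorAlgebra K V →ₗ[K] TensorAlgebra K V ⊗[K] TensorAlgebra K V)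

lemma P_zero_def : P Δ ε u Φ 0 = ε.smulRight 1 := rfl

theorem KeyDelta
    (hΔT : ∀ l : List V, ΔT (listProd K l) = ∑ p ∈ Finset.range (l.length + 1),
        listProd K (l.take p) ⊗ₜ[K] listProd K (l.drop p))
    (hcoassoc : ∀ x : C,
      (TensorProduct.assoc K C C C) ((TensorProduct.map Δ LinearMap.id) (Δ x))
        = (TensorProduct.map LinearMap.id Δ) (Δ x))
    (hcounitl : ∀ x : C,
      (TensorProduct.lid K C) ((TensorProduct.map ε LinearMap.id) (Δ x)) = x)
    (hcounitr : ∀ x : C,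
      (TensorProduct.rid K C) ((TensorProduct.map LinearMap.id ε) (Δ x)) = x)
    (huΔ : Δ u = u ⊗ₜ[K] u) (hε : ε u = 1) (hΦ : Φ u = 0) :
    ∀ (n : ℕ) (x : C),
      ΔT (P Δ ε u Φ n x)
        = ∑ p ∈ Finset.range (n+1),
            TensorProduct.map (P Δ ε u Φ p) (P Δ ε u Φ (n-p)) (Δ x) := by
  intro n
  induction n using Nat.twoStepInduction with
  | zero =>
      intro x
      rw [Finset.sum_range_one, Nat.sub_zero, P_zero_def,
        counit_left hcounitl (ε.smulRight (1 : TensorAlgebra K V)) 1 x,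
        LinearMap.smulRight_apply, map_smul, DeltaT_one ΔT hΔT,
        TensorProduct.tmul_smul]
  | one =>
      intro x
      rw [Finset.sum_range_succ, Finset.sum_range_one]
      have h0 : TensorProduct.map (P Δ ε u Φ 0) (P Δ ε u Φ (1-0)) (Δ x)
          = 1 ⊗ₜ[K] P Δ ε u Φ 1 x := by
        rw [P_zero_def]
        exact counit_left hcounitl (P Δ ε u Φ 1) 1 x
      have h1 : TensorProduct.map (P Δ ε u Φ 1) (P Δ ε u Φ (1-1)) (Δ x)
          = P Δ ε u Φ 1 x ⊗ₜ[K] 1 := by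
        rw [show (1-1 : ℕ) = 0 from rfl, P_zero_def]
        exact counit_right hcounitr (P Δ ε u Φ 1) 1 x
      rw [h0, h1, P_one_apply, DeltaT_iota ΔT hΔT]
  | more n IH2 IH1 =>
      intro x
      rw [P_succ_succ, DeltaT_M ΔT hΔT (n+1) IH1 (Db Δ u (pib ε u x))]
      -- compute the inner expression
      have hE : (TensorProduct.assoc K C C C).symm
            ((TensorProduct.map LinearMap.id Δ) (Db Δ u (pib ε u x)))
          = (TensorProduct.map Δ LinearMap.id) (Δ x)
            - (TensorProduct.assoc K C C C).symm (u ⊗ₜ[K] Δ x)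
            - (x ⊗ₜ[K] u) ⊗ₜ[K] u
            + ε x • ((u ⊗ₜ[K] u) ⊗ₜ[K] u) := by
        rw [Db_pib_expand huΔ, map_add, map_sub, map_sub, map_smul,
          map_add, map_sub, map_sub, map_smul]
        simp only [TensorProduct.map_tmul, LinearMap.id_coe, id_eq, huΔ,
          TensorProduct.assoc_symm_tmul]
        rw [show (TensorProduct.assoc K C C C).symm
            ((TensorProduct.map LinearMap.id Δ) (Δ x))
            = (TensorProduct.map Δ LinearMap.id) (Δ x) from
          (LinearEquiv.symm_apply_eq _).mpr (hcoassoc x).symm]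
      rw [hE]
      simp only [map_sub, map_add, map_smul]
      have hT2 : ∀ p ∈ Finset.range (n+2),
          TensorProduct.map (M Δ ε u Φ p) (P Δ ε u Φ (n+1-p))
            ((TensorProduct.assoc K C C C).symm (u ⊗ₜ[K] Δ x)) = 0 := by
        intro p _
        rw [← mulLeft_assoc_aux, hΦ, map_zero, LinearMap.mulLeft_zero_eq_zero,
          TensorProduct.map_zero_left, LinearMap.zero_apply]
      have hT3 : ∀ p ∈ Finset.range (n+2),
          TensorProduct.map (M Δ ε u Φ p) (P Δ ε u Φ (n+1-p))
            ((x ⊗ₜ[K] u) ⊗ₜ[K] u) = 0 := by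
        intro p _
        rw [TensorProduct.map_tmul, M_tmul]
        match p with
        | 0 =>
            rw [P_u hε hΦ (n+1-0) (by omega), TensorProduct.tmul_zero]
        | (p+1) =>
            rw [P_u hε hΦ (p+1) (by omega), mul_zero, TensorProduct.zero_tmul]
      have hT4 : ∀ p ∈ Finset.range (n+2),
          TensorProduct.map (M Δ ε u Φ p) (P Δ ε u Φ (n+1-p))
            ((u ⊗ₜ[K] u) ⊗ₜ[K] u) = 0 := by
        intro p _
        rw [TensorProduct.map_tmul, M_tmul, hΦ, map_zero, zero_mul,
          TensorProduct.zero_tmul]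
      have hT1 : ∀ p ∈ Finset.range (n+2),
          TensorProduct.map (M Δ ε u Φ p) (P Δ ε u Φ (n+1-p))
            ((TensorProduct.map Δ LinearMap.id) (Δ x))
          = TensorProduct.map (P Δ ε u Φ (p+1)) (P Δ ε u Φ (n+1-p)) (Δ x) := by
        intro p _
        rw [← LinearMap.comp_apply, ← TensorProduct.map_comp,
          M_Delta_comp hcounitr huΔ hε hΦ, LinearMap.comp_id]
      have hAll : ∀ p ∈ Finset.range (n+2),
          TensorProduct.map (M Δ ε u Φ p) (P Δ ε u Φ (n+1-p))
              ((TensorProduct.map Δ LinearMap.id) (Δ x))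
            - TensorProduct.map (M Δ ε u Φ p) (P Δ ε u Φ (n+1-p))
                ((TensorProduct.assoc K C C C).symm (u ⊗ₜ[K] Δ x))
            - TensorProduct.map (M Δ ε u Φ p) (P Δ ε u Φ (n+1-p))
                ((x ⊗ₜ[K] u) ⊗ₜ[K] u)
            + ε x • TensorProduct.map (M Δ ε u Φ p) (P Δ ε u Φ (n+1-p))
                ((u ⊗ₜ[K] u) ⊗ₜ[K] u)
          = TensorProduct.map (P Δ ε u Φ (p+1)) (P Δ ε u Φ (n+1-p)) (Δ x) := by
        intro p hp
        rw [hT1 p hp, hT2 p hp, hT3 p hp, hT4 p hp, smul_zero, sub_zero, sub_zero,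
          add_zero]
      rw [Finset.sum_congr rfl hAll]
      -- reindex
      rw [Finset.sum_range_succ' (fun p => TensorProduct.map (P Δ ε u Φ p)
        (P Δ ε u Φ (n+2-p)) (Δ x)) (n+2)]
      have h0 : TensorProduct.map (P Δ ε u Φ 0) (P Δ ε u Φ (n+2-0)) (Δ x)
          = 1 ⊗ₜ[K] P Δ ε u Φ (n+2) x := by
        rw [P_zero_def]
        exact counit_left hcounitl (P Δ ε u Φ (n+2)) 1 x
      rw [h0]
      have hsum : ∀ p ∈ Finset.range (n+2),
          TensorProduct.map (P Δ ε u Φ (p+1)) (P Δ ε u Φ (n+1-p)) (Δ x)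
          = TensorProduct.map (P Δ ε u Φ (p+1)) (P Δ ε u Φ (n+2-(p+1))) (Δ x) := by
        intro p hp
        have e : n+2-(p+1) = n+1-p := by omega
        rw [e]
      rw [Finset.sum_congr rfl hsum, P_succ_succ]
      rw [add_comm]

end KeyDelta


section Unique

variable (ΔT : TensorAlgebra K V →ₗ[K] TensorAlgebra K V ⊗[K] TensorAlgebra K V)
variable (εT : TensorAlgebra K V →ₗ[K] K) (proj : TensorAlgebra K V →ₗ[K] V)

/-- "cut off the first letter and glue it back": Θ y = y - εT y • 1. -/
lemma Theta_eq
    (hΔT : ∀ l : List V, ΔT (listProd K l) = ∑ p ∈ Finset.range (l.length + 1),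
        listProd K (l.take p) ⊗ₜ[K] listProd K (l.drop p))
    (hεT1 : εT 1 = 1)
    (hεT : ∀ l : List V, l ≠ [] → εT (listProd K l) = 0)
    (hproj1 : proj 1 = 0)
    (hprojι : ∀ v : V, proj (TensorAlgebra.ι K v) = v)
    (hproj : ∀ l : List V, 2 ≤ l.length → proj (listProd K l) = 0)
    (y : TensorAlgebra K V) :
    LinearMap.mul' K (TensorAlgebra K V)
        (TensorProduct.map (TensorAlgebra.ι K ∘ₗ proj) LinearMap.id (ΔT y))
      = y - εT y • 1 := by
  have hy : y ∈ Submodule.span K {x : TensorAlgebra K V | ∃ l : List V, listProd K l = x} := by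
    rw [span_words_top]; trivial
  induction hy using Submodule.span_induction with
  | mem x hx =>
      obtain ⟨l, rfl⟩ := hx
      match l with
      | [] =>
          rw [listProd_nil, DeltaT_one ΔT hΔT, TensorProduct.map_tmul]
          simp [hproj1, hεT1]
      | (a :: l') =>
          rw [hΔT (a :: l'), map_sum, map_sum, List.length_cons,
            Finset.sum_range_succ' _ (l'.length + 1)]
          have h0 : LinearMap.mul' K (TensorAlgebra K V)
              (TensorProduct.map (TensorAlgebra.ι K ∘ₗ proj) LinearMap.id
                (listProd K ((a::l').take 0) ⊗ₜ[K] listProd K ((a::l').drop 0))) = 0 := by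
            simp [listProd_nil, hproj1, LinearMap.mul'_apply]
          rw [h0, add_zero]
          have hterm : ∀ i ∈ Finset.range (l'.length + 1),
              LinearMap.mul' K (TensorAlgebra K V)
                (TensorProduct.map (TensorAlgebra.ι K ∘ₗ proj) LinearMap.id
                  (listProd K ((a::l').take (i+1)) ⊗ₜ[K] listProd K ((a::l').drop (i+1))))
              = if i = 0 then listProd K (a::l') else 0 := by
            intro i hi
            rw [Finset.mem_range] at hi
            rw [List.take_succ_cons, List.drop_succ_cons, TensorProduct.map_tmul,
              LinearMap.mul'_apply]
            match i with
            | 0 =>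
                simp only [List.take_zero, List.drop_zero, listProd_nil, mul_one, if_true,
                  LinearMap.id_coe, id_eq, LinearMap.comp_apply]
                rw [show listProd K [a] = TensorAlgebra.ι K a from by simp [listProd],
                  hprojι a, ← listProd_cons]
            | (i+1) =>
                rw [LinearMap.comp_apply]
                rw [hproj (a :: List.take (i+1) l') (by
                  simp only [List.length_cons, List.length_take]
                  omega)]
                simp
          rw [Finset.sum_congr rfl hterm, Finset.sum_ite_eq' (Finset.range (l'.length+1)) 0]
          simp only [Finset.mem_range, Nat.lt_add_one_iff, Nat.zero_le, if_true]
          rw [hεT (a::l') (by simp), zero_smul, sub_zero]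
  | zero => simp
  | add x y hx hy ihx ihy =>
      rw [map_add, map_add, map_add, ihx, ihy, map_add, add_smul]
      abel
  | smul c x hx ih =>
      rw [map_smul, map_smul, map_smul, ih, map_smul, smul_sub, smul_smul]
      rw [smul_eq_mul]

lemma primitive_zero
    (hΔT : ∀ l : List V, ΔT (listProd K l) = ∑ p ∈ Finset.range (l.length + 1),
        listProd K (l.take p) ⊗ₜ[K] listProd K (l.drop p))
    (hεT1 : εT 1 = 1)
    (hεT : ∀ l : List V, l ≠ [] → εT (listProd K l) = 0)
    (hproj1 : proj 1 = 0)
    (hprojι : ∀ v : V, proj (TensorAlgebra.ι K v) = v)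
    (hproj : ∀ l : List V, 2 ≤ l.length → proj (listProd K l) = 0)
    (y : TensorAlgebra K V)
    (hy : ΔT y = 1 ⊗ₜ[K] y + y ⊗ₜ[K] 1)
    (hyε : εT y = 0) (hyp : proj y = 0) : y = 0 := by
  have := Theta_eq ΔT εT proj hΔT hεT1 hεT hproj1 hprojι hproj y
  rw [hy, hyε, zero_smul, sub_zero, map_add, map_add, TensorProduct.map_tmul,
    TensorProduct.map_tmul, LinearMap.mul'_apply, LinearMap.mul'_apply] at this
  rw [← this, LinearMap.comp_apply, LinearMap.comp_apply, hproj1, hyp]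
  simp

end Unique


section Agree

variable (ΔT : TensorAlgebra K V →ₗ[K] TensorAlgebra K V ⊗[K] TensorAlgebra K V)
variable (εT : TensorAlgebra K V →ₗ[K] K) (proj : TensorAlgebra K V →ₗ[K] V)

lemma Delta_eq_Db (x : C) : Δ x = Db Δ u x + u ⊗ₜ[K] x + x ⊗ₜ[K] u := by
  rw [Db_apply]; abel

lemma map_sub_split {A B : Type*} [AddCommGroup A] [Module K A] [AddCommGroup B]
    [Module K B] (g₁ g₂ : A →ₗ[K] B) (s : A ⊗[K] A) :
    TensorProduct.map g₁ g₁ s - TensorProduct.map g₂ g₂ s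
      = TensorProduct.map (g₁ - g₂) g₁ s + TensorProduct.map g₂ (g₁ - g₂) s := by
  induction s using TensorProduct.induction_on with
  | zero => simp
  | tmul a b =>
      simp only [TensorProduct.map_tmul, LinearMap.sub_apply, TensorProduct.sub_tmul,
        TensorProduct.tmul_sub]
      abel
  | add s t hs ht =>
      rw [map_add, map_add, map_add, map_add, add_sub_add_comm, hs, ht]
      abel

lemma agree
    (hΔT : ∀ l : List V, ΔT (listProd K l) = ∑ p ∈ Finset.range (l.length + 1),
        listProd K (l.take p) ⊗ₜ[K] listProd K (l.drop p))
    (hεT1 : εT 1 = 1)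
    (hεT : ∀ l : List V, l ≠ [] → εT (listProd K l) = 0)
    (hproj1 : proj 1 = 0)
    (hprojι : ∀ v : V, proj (TensorAlgebra.ι K v) = v)
    (hproj : ∀ l : List V, 2 ≤ l.length → proj (listProd K l) = 0)
    (g₁ g₂ : C →ₗ[K] TensorAlgebra K V)
    (h1u : g₁ u = 1)
    (h1Δ : ∀ x : C, ΔT (g₁ x) = TensorProduct.map g₁ g₁ (Δ x))
    (h1ε : ∀ x : C, εT (g₁ x) = ε x)
    (h1p : ∀ x : C, proj (g₁ x) = Φ x)
    (h2u : g₂ u = 1)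
    (h2Δ : ∀ x : C, ΔT (g₂ x) = TensorProduct.map g₂ g₂ (Δ x))
    (h2ε : ∀ x : C, εT (g₂ x) = ε x)
    (h2p : ∀ x : C, proj (g₂ x) = Φ x) :
    ∀ (r : ℕ) (x : C), x ∈ coradFiltration Δ u r → g₁ x = g₂ x := by
  intro r
  induction r with
  | zero =>
      intro x hx
      obtain ⟨a, rfl⟩ := Submodule.mem_span_singleton.mp hx
      rw [map_smul, map_smul, h1u, h2u]
  | succ r IH =>
      intro x hx
      rw [coradFiltration_succ, Submodule.mem_comap] at hx
      obtain ⟨t, ht⟩ := hx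
      set y := g₁ x - g₂ x with hy
      have hgu : (g₁ - g₂) u = 0 := by
        rw [LinearMap.sub_apply, h1u, h2u, sub_self]
      have hz1 : ∀ t' : (coradFiltration Δ u r) ⊗[K] (coradFiltration Δ u r),
          TensorProduct.map (g₁ - g₂) g₁
            ((TensorProduct.map (coradFiltration Δ u r).subtype
              (coradFiltration Δ u r).subtype) t') = 0 := by
        intro t'
        induction t' using TensorProduct.induction_on with
        | zero => simp
        | tmul a b =>
            rw [TensorProduct.map_tmul, TensorProduct.map_tmul]
            have : (g₁ - g₂) ((coradFiltration Δ u r).subtype a) = 0 := by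
              simp only [Submodule.subtype_apply, LinearMap.sub_apply]
              rw [IH a.1 a.2, sub_self]
            rw [this, TensorProduct.zero_tmul]
        | add s t hs ht => rw [map_add, map_add, hs, ht, add_zero]
      have hz2 : ∀ t' : (coradFiltration Δ u r) ⊗[K] (coradFiltration Δ u r),
          TensorProduct.map g₂ (g₁ - g₂)
            ((TensorProduct.map (coradFiltration Δ u r).subtype
              (coradFiltration Δ u r).subtype) t') = 0 := by
        intro t'
        induction t' using TensorProduct.induction_on with
        | zero => simp
        | tmul a b =>
            rw [TensorProduct.map_tmul, TensorProduct.map_tmul]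
            have : (g₁ - g₂) ((coradFiltration Δ u r).subtype b) = 0 := by
              simp only [Submodule.subtype_apply, LinearMap.sub_apply]
              rw [IH b.1 b.2, sub_self]
            rw [this, TensorProduct.tmul_zero]
        | add s t hs ht => rw [map_add, map_add, hs, ht, add_zero]
      have hDb1 : TensorProduct.map (g₁ - g₂) g₁ (Db Δ u x) = 0 := by
        rw [← ht]; exact hz1 t
      have hDb2 : TensorProduct.map g₂ (g₁ - g₂) (Db Δ u x) = 0 := by
        rw [← ht]; exact hz2 t
      have hΔy : ΔT y = 1 ⊗ₜ[K] y + y ⊗ₜ[K] 1 := by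
        rw [hy, map_sub, h1Δ x, h2Δ x, map_sub_split g₁ g₂ (Δ x),
          Delta_eq_Db (u := u) x]
        rw [map_add, map_add, map_add, map_add, hDb1, hDb2]
        simp only [TensorProduct.map_tmul, hgu, h1u, h2u, LinearMap.sub_apply,
          TensorProduct.zero_tmul, TensorProduct.tmul_zero]
        rw [← hy]
        abel
      have hεy : εT y = 0 := by
        rw [hy, map_sub, h1ε, h2ε, sub_self]
      have hpy : proj y = 0 := by
        rw [hy, map_sub, h1p, h2p, sub_self]
      have := primitive_zero ΔT εT proj hΔT hεT1 hεT hproj1 hprojι hproj y hΔy hεy hpy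
      rw [hy] at this
      exact sub_eq_zero.mp this

end Agree


section Gmap

lemma support_subset (hε : ε u = 1) (hΦ : Φ u = 0) (huΔ : Δ u = u ⊗ₜ[K] u)
    {x : C} {r : ℕ} (hx : x ∈ coradFiltration Δ u r) :
    Function.support (fun n => P Δ ε u Φ n x) ⊆ ↑(Finset.range (r+1)) := by
  intro n hn
  simp only [Finset.coe_range, Set.mem_Iio]
  by_contra h
  exact hn (P_vanish hε hΦ huΔ r x hx n (by omega))

lemma gval (hε : ε u = 1) (hΦ : Φ u = 0) (huΔ : Δ u = u ⊗ₜ[K] u)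
    {x : C} {r : ℕ} (hx : x ∈ coradFiltration Δ u r) :
    (∑ᶠ n, P Δ ε u Φ n x) = ∑ n ∈ Finset.range (r+1), P Δ ε u Φ n x :=
  finsum_eq_sum_of_support_subset _ (support_subset hε hΦ huΔ hx)

/-- the cofree extension -/
noncomputable def gmap (Δ : C →ₗ[K] C ⊗[K] C) (ε : C →ₗ[K] K) (u : C) (Φ : C →ₗ[K] V)
    (hε : ε u = 1) (hΦ : Φ u = 0) (huΔ : Δ u = u ⊗ₜ[K] u)
    (hconn : ∀ x : C, ∃ r : ℕ, x ∈ coradFiltration Δ u r) :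
    C →ₗ[K] TensorAlgebra K V where
  toFun := fun x => ∑ᶠ n, P Δ ε u Φ n x
  map_add' := by
    intro x y
    obtain ⟨r₁, hx⟩ := hconn x
    obtain ⟨r₂, hy⟩ := hconn y
    have hx' : x ∈ coradFiltration Δ u (max r₁ r₂) := F_le huΔ (le_max_left _ _) hx
    have hy' : y ∈ coradFiltration Δ u (max r₁ r₂) := F_le huΔ (le_max_right _ _) hy
    rw [gval hε hΦ huΔ (add_mem hx' hy'), gval hε hΦ huΔ hx', gval hε hΦ huΔ hy',
      ← Finset.sum_add_distrib]
    simp only [map_add]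
  map_smul' := by
    intro c x
    obtain ⟨r, hx⟩ := hconn x
    rw [RingHom.id_apply, gval hε hΦ huΔ (Submodule.smul_mem _ c hx),
      gval hε hΦ huΔ hx, Finset.smul_sum]
    simp only [map_smul]

lemma gmap_apply (hε : ε u = 1) (hΦ : Φ u = 0) (huΔ : Δ u = u ⊗ₜ[K] u)
    (hconn : ∀ x : C, ∃ r : ℕ, x ∈ coradFiltration Δ u r)
    {x : C} {r : ℕ} (hx : x ∈ coradFiltration Δ u r) :
    gmap Δ ε u Φ hε hΦ huΔ hconn x = ∑ n ∈ Finset.range (r+1), P Δ ε u Φ n x :=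
  gval hε hΦ huΔ hx

lemma gmap_u (hε : ε u = 1) (hΦ : Φ u = 0) (huΔ : Δ u = u ⊗ₜ[K] u)
    (hconn : ∀ x : C, ∃ r : ℕ, x ∈ coradFiltration Δ u r) :
    gmap Δ ε u Φ hε hΦ huΔ hconn u = 1 := by
  rw [gmap_apply hε hΦ huΔ hconn (u_mem_F huΔ 0),
    Finset.sum_range_one, P_u_zero hε]

end Gmap


section GmapProps

variable (εT : TensorAlgebra K V →ₗ[K] K) (proj : TensorAlgebra K V →ₗ[K] V)

lemma gmap_eps (hε : ε u = 1) (hΦ : Φ u = 0) (huΔ : Δ u = u ⊗ₜ[K] u)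
    (hconn : ∀ x : C, ∃ r : ℕ, x ∈ coradFiltration Δ u r)
    (hεT1 : εT 1 = 1)
    (hεT : ∀ l : List V, l ≠ [] → εT (listProd K l) = 0)
    (x : C) : εT (gmap Δ ε u Φ hε hΦ huΔ hconn x) = ε x := by
  obtain ⟨r, hx⟩ := hconn x
  rw [gmap_apply hε hΦ huΔ hconn hx, map_sum,
    Finset.sum_range_succ' (fun n => εT (P Δ ε u Φ n x)) r]
  have hz : ∀ i ∈ Finset.range r, εT (P Δ ε u Φ (i+1) x) = 0 := fun i _ =>
    epsT_W εT hεT (Nat.le_add_left 1 i) (P_mem_W (i+1) x)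
  rw [Finset.sum_congr rfl hz, Finset.sum_const_zero, zero_add, P_zero_apply,
    map_smul, hεT1, smul_eq_mul, mul_one]

lemma gmap_proj (hε : ε u = 1) (hΦ : Φ u = 0) (huΔ : Δ u = u ⊗ₜ[K] u)
    (hconn : ∀ x : C, ∃ r : ℕ, x ∈ coradFiltration Δ u r)
    (hproj1 : proj 1 = 0)
    (hprojι : ∀ v : V, proj (TensorAlgebra.ι K v) = v)
    (hproj : ∀ l : List V, 2 ≤ l.length → proj (listProd K l) = 0)
    (x : C) : proj (gmap Δ ε u Φ hε hΦ huΔ hconn x) = Φ x := by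
  obtain ⟨r, hx⟩ := hconn x
  have hx' : x ∈ coradFiltration Δ u (r+1) := F_mono huΔ r hx
  rw [gmap_apply hε hΦ huΔ hconn hx', map_sum,
    Finset.sum_range_succ' (fun n => proj (P Δ ε u Φ n x)) (r+1),
    Finset.sum_range_succ' (fun i => proj (P Δ ε u Φ (i+1) x)) r]
  have hz : ∀ i ∈ Finset.range r, proj (P Δ ε u Φ (i+1+1) x) = 0 := fun i _ =>
    proj_W proj hproj (by omega) (P_mem_W (i+2) x)
  rw [Finset.sum_congr rfl hz, Finset.sum_const_zero, zero_add, P_one_apply,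
    P_zero_apply, map_smul, hproj1, smul_zero, add_zero, hprojι]

lemma Delta_mem (huΔ : Δ u = u ⊗ₜ[K] u) :
    ∀ (r : ℕ) (x : C), x ∈ coradFiltration Δ u r →
      Δ x ∈ LinearMap.range (TensorProduct.map
        (coradFiltration Δ u r).subtype (coradFiltration Δ u r).subtype)
  | 0, x, hx => by
      obtain ⟨a, rfl⟩ := Submodule.mem_span_singleton.mp hx
      rw [map_smul, huΔ]
      refine Submodule.smul_mem _ _ ?_
      exact ⟨(⟨u, Submodule.mem_span_singleton_self u⟩ :
        coradFiltration Δ u 0) ⊗ₜ[K] ⟨u, Submodule.mem_span_singleton_self u⟩, rfl⟩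
  | (r+1), x, hx => by
      rw [coradFiltration_succ, Submodule.mem_comap] at hx
      rw [Delta_eq_Db (u := u) x]
      refine add_mem (add_mem ?_ ?_) ?_
      · exact range_map_mono (F_mono huΔ r) hx
      · exact ⟨(⟨u, u_mem_F huΔ (r+1)⟩ : coradFiltration Δ u (r+1)) ⊗ₜ[K]
          ⟨x, by rw [coradFiltration_succ, Submodule.mem_comap]; exact hx⟩, rfl⟩
      · exact ⟨(⟨x, by rw [coradFiltration_succ, Submodule.mem_comap]; exact hx⟩ :
          coradFiltration Δ u (r+1)) ⊗ₜ[K] ⟨u, u_mem_F huΔ (r+1)⟩, rfl⟩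

lemma gmap_square (hε : ε u = 1) (hΦ : Φ u = 0) (huΔ : Δ u = u ⊗ₜ[K] u)
    (hconn : ∀ x : C, ∃ r : ℕ, x ∈ coradFiltration Δ u r) (r : ℕ)
    (t' : (coradFiltration Δ u r) ⊗[K] (coradFiltration Δ u r)) :
    TensorProduct.map (gmap Δ ε u Φ hε hΦ huΔ hconn) (gmap Δ ε u Φ hε hΦ huΔ hconn)
        ((TensorProduct.map (coradFiltration Δ u r).subtype
          (coradFiltration Δ u r).subtype) t')
      = ∑ p ∈ Finset.range (r+1), ∑ q ∈ Finset.range (r+1),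
          TensorProduct.map (P Δ ε u Φ p) (P Δ ε u Φ q)
            ((TensorProduct.map (coradFiltration Δ u r).subtype
              (coradFiltration Δ u r).subtype) t') := by
  induction t' using TensorProduct.induction_on with
  | zero => simp
  | tmul a b =>
      rw [TensorProduct.map_tmul, TensorProduct.map_tmul]
      simp only [Submodule.subtype_apply]
      rw [gmap_apply hε hΦ huΔ hconn a.2, gmap_apply hε hΦ huΔ hconn b.2,
        TensorProduct.sum_tmul]
      refine Finset.sum_congr rfl fun p _ => ?_
      rw [TensorProduct.tmul_sum]
      refine Finset.sum_congr rfl fun q _ => ?_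
      rw [TensorProduct.map_tmul]
  | add s t hs ht =>
      simp only [map_add]
      rw [hs, ht, ← Finset.sum_add_distrib]
      refine Finset.sum_congr rfl fun p _ => ?_
      rw [← Finset.sum_add_distrib]

lemma PP_vanish (hε : ε u = 1) (hΦ : Φ u = 0) (huΔ : Δ u = u ⊗ₜ[K] u)
    (r : ℕ) (t' : (coradFiltration Δ u r) ⊗[K] (coradFiltration Δ u r))
    (p q : ℕ) (h : r < p ∨ r < q) :
    TensorProduct.map (P Δ ε u Φ p) (P Δ ε u Φ q)
        ((TensorProduct.map (coradFiltration Δ u r).subtype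
          (coradFiltration Δ u r).subtype) t') = 0 := by
  induction t' using TensorProduct.induction_on with
  | zero => simp
  | tmul a b =>
      rw [TensorProduct.map_tmul, TensorProduct.map_tmul]
      rcases h with h | h
      · rw [show ((coradFiltration Δ u r).subtype a : C) = a.1 from rfl,
          P_vanish hε hΦ huΔ r a.1 a.2 p h, TensorProduct.zero_tmul]
      · rw [show ((coradFiltration Δ u r).subtype b : C) = b.1 from rfl,
          P_vanish hε hΦ huΔ r b.1 b.2 q h, TensorProduct.tmul_zero]
  | add s t hs ht => rw [map_add, map_add, hs, ht, add_zero]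

end GmapProps


section Comb

lemma square_triangle {α : Type*} [AddCommMonoid α] (r : ℕ) (c : ℕ → ℕ → α)
    (hc : ∀ p q, (r < p ∨ r < q) → c p q = 0) :
    ∑ p ∈ Finset.range (r+1), ∑ q ∈ Finset.range (r+1), c p q
      = ∑ n ∈ Finset.range (2*r+1), ∑ p ∈ Finset.range (n+1), c p (n-p) := by
  have h1 : ∀ n, ∑ p ∈ Finset.range (n+1), c p (n-p)
      = ∑ ij ∈ Finset.HasAntidiagonal.antidiagonal n, c ij.1 ij.2 :=
    fun n => (Finset.Nat.sum_antidiagonal_eq_sum_range_succ_mk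
      (fun ij => c ij.1 ij.2) n).symm
  rw [Finset.sum_congr rfl (fun n _ => h1 n)]
  have hdisj : (↑(Finset.range (2*r+1)) : Set ℕ).PairwiseDisjoint
      (Finset.HasAntidiagonal.antidiagonal : ℕ → Finset (ℕ × ℕ)) := by
    intro m _ n _ hmn
    rw [Function.onFun, Finset.disjoint_left]
    intro ij h1' h2'
    rw [Finset.HasAntidiagonal.mem_antidiagonal] at h1' h2'
    exact hmn (h1' ▸ h2')
  rw [← Finset.sum_biUnion hdisj, ← Finset.sum_product']
  refine Finset.sum_subset ?_ ?_
  · intro ij hij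
    rw [Finset.mem_product, Finset.mem_range, Finset.mem_range] at hij
    rw [Finset.mem_biUnion]
    exact ⟨ij.1 + ij.2, Finset.mem_range.mpr (by omega),
      Finset.HasAntidiagonal.mem_antidiagonal.mpr rfl⟩
  · intro ij hij hns
    rw [Finset.mem_biUnion] at hij
    obtain ⟨n, hn, hijn⟩ := hij
    rw [Finset.mem_range] at hn
    rw [Finset.HasAntidiagonal.mem_antidiagonal] at hijn
    rw [Finset.mem_product, Finset.mem_range, Finset.mem_range] at hns
    push_neg at hns
    by_cases h : ij.1 < r + 1
    · exact hc ij.1 ij.2 (Or.inr (by omega))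
    · exact hc ij.1 ij.2 (Or.inl (by omega))

end Comb

section Comul

variable (ΔT : TensorAlgebra K V →ₗ[K] TensorAlgebra K V ⊗[K] TensorAlgebra K V)

lemma gmap_comul
    (hΔT : ∀ l : List V, ΔT (listProd K l) = ∑ p ∈ Finset.range (l.length + 1),
        listProd K (l.take p) ⊗ₜ[K] listProd K (l.drop p))
    (hcoassoc : ∀ x : C,
      (TensorProduct.assoc K C C C) ((TensorProduct.map Δ LinearMap.id) (Δ x))
        = (TensorProduct.map LinearMap.id Δ) (Δ x))
    (hcounitl : ∀ x : C,
      (TensorProduct.lid K C) ((TensorProduct.map ε LinearMap.id) (Δ x)) = x)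
    (hcounitr : ∀ x : C,
      (TensorProduct.rid K C) ((TensorProduct.map LinearMap.id ε) (Δ x)) = x)
    (hε : ε u = 1) (hΦ : Φ u = 0) (huΔ : Δ u = u ⊗ₜ[K] u)
    (hconn : ∀ x : C, ∃ r : ℕ, x ∈ coradFiltration Δ u r)
    (x : C) :
    ΔT (gmap Δ ε u Φ hε hΦ huΔ hconn x)
      = TensorProduct.map (gmap Δ ε u Φ hε hΦ huΔ hconn)
          (gmap Δ ε u Φ hε hΦ huΔ hconn) (Δ x) := by
  obtain ⟨r, hx⟩ := hconn x
  have hx2 : x ∈ coradFiltration Δ u (2*r) := F_le huΔ (by omega) hx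
  obtain ⟨t', ht'⟩ := Delta_mem huΔ r x hx
  rw [gmap_apply hε hΦ huΔ hconn hx2, map_sum]
  rw [Finset.sum_congr rfl (fun n (_ : n ∈ Finset.range (2*r+1)) =>
    KeyDelta ΔT hΔT hcoassoc hcounitl hcounitr huΔ hε hΦ n x)]
  rw [← ht', gmap_square hε hΦ huΔ hconn r t', ht']
  exact (square_triangle r
    (fun p q => TensorProduct.map (P Δ ε u Φ p) (P Δ ε u Φ q) (Δ x))
    (fun p q h => by rw [← ht']; exact PP_vanish hε hΦ huΔ r t' p q h)).symm

end Comul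

end TCF

open TCF

/-- The tensor coalgebra `T(V)` with deconcatenation coproduct is the cofree
connected coassociative coalgebra on `V`: for any connected coaugmented
coassociative coalgebra `C` and any linear map `Φ : C → V` with `Φ(1) = 0`,
there is a unique coaugmented coalgebra morphism `Φ̃ : C → T(V)` with
`p ∘ Φ̃ = Φ`, where `p : T(V) → V` is the projection onto `V`. -/
theorem tensor_coalgebra_cofree
    {K V C : Type*} [Field K] [AddCommGroup V] [Module K V]
    [AddCommGroup C] [Module K C]
    -- deconcatenation coproduct, counit and projection on T(V)
    (ΔT : TensorAlgebra K V →ₗ[K] TensorAlgebra K V ⊗[K] TensorAlgebra K V)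
    (hΔT : ∀ l : List V,
      ΔT (listProd K l) = ∑ p ∈ Finset.range (l.length + 1),
        listProd K (l.take p) ⊗ₜ[K] listProd K (l.drop p))
    (εT : TensorAlgebra K V →ₗ[K] K)
    (hεT1 : εT 1 = 1)
    (hεT : ∀ l : List V, l ≠ [] → εT (listProd K l) = 0)
    (proj : TensorAlgebra K V →ₗ[K] V)
    (hproj1 : proj 1 = 0)
    (hprojι : ∀ v : V, proj (TensorAlgebra.ι K v) = v)
    (hproj : ∀ l : List V, 2 ≤ l.length → proj (listProd K l) = 0)
    -- the connected coaugmented coassociative coalgebra C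
    (ΔC : C →ₗ[K] C ⊗[K] C) (εC : C →ₗ[K] K) (uC : C)
    (hcoassoc : ∀ x : C,
      (TensorProduct.assoc K C C C) ((TensorProduct.map ΔC LinearMap.id) (ΔC x))
        = (TensorProduct.map LinearMap.id ΔC) (ΔC x))
    (hcounitl : ∀ x : C,
      (TensorProduct.lid K C) ((TensorProduct.map εC LinearMap.id) (ΔC x)) = x)
    (hcounitr : ∀ x : C,
      (TensorProduct.rid K C) ((TensorProduct.map LinearMap.id εC) (ΔC x)) = x)
    (huΔ : ΔC uC = uC ⊗ₜ[K] uC) (huε : εC uC = 1)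
    (hconn : ∀ x : C, ∃ r : ℕ, x ∈ coradFiltration ΔC uC r)
    -- the map to be extended
    (Φ : C →ₗ[K] V) (hΦ1 : Φ uC = 0) :
    ∃! g : C →ₗ[K] TensorAlgebra K V,
      g uC = 1 ∧
      (∀ x : C, ΔT (g x) = (TensorProduct.map g g) (ΔC x)) ∧
      (∀ x : C, εT (g x) = εC x) ∧
      (∀ x : C, proj (g x) = Φ x) := by
  refine ⟨gmap ΔC εC uC Φ huε hΦ1 huΔ hconn,
    ⟨gmap_u huε hΦ1 huΔ hconn,
      gmap_comul ΔT hΔT hcoassoc hcounitl hcounitr huε hΦ1 huΔ hconn,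
      gmap_eps εT huε hΦ1 huΔ hconn hεT1 hεT,
      gmap_proj proj huε hΦ1 huΔ hconn hproj1 hprojι hproj⟩, ?_⟩
  rintro g' ⟨h'u, h'Δ, h'ε, h'p⟩
  apply LinearMap.ext
  intro x
  obtain ⟨r, hx⟩ := hconn x
  exact agree ΔT εT proj hΔT hεT1 hεT hproj1 hprojι hproj
    g' (gmap ΔC εC uC Φ huε hΦ1 huΔ hconn)
    h'u h'Δ h'ε h'p
    (gmap_u huε hΦ1 huΔ hconn)
    (gmap_comul ΔT hΔT hcoassoc hcounitl hcounitr huε hΦ1 huΔ hconn)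
    (gmap_eps εT huε hΦ1 huΔ hconn hεT1 hεT)
    (gmap_proj proj huε hΦ1 huΔ hconn hproj1 hprojι hproj)
    r x hx
end

section
/- In the completed free magmatic algebra on one generator t, the formal series g(t) = t − t·t + (t·t)·t − ⋯ + (−1)^{n+1}(⋯((t·t)·t)⋯·t) + ⋯ (left-combed trees with alternating signs) and f(t) = t + t·t + t·(t·t) + ⋯ + t·(t·(⋯(t·t))) + ⋯ (right-combed trees) are mutually inverse for composition: f ∘ g = id and g ∘ f = id. -/
namespace MagSeries

/-- Number of leaves of a planar binary tree (element of the free magma on one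
generator). -/
def size : FreeMagma Unit → ℕ
  | FreeMagma.of _ => 1
  | FreeMagma.mul a b => size a + size b

/-- Is the tree a left comb `((((t·t)·t)⋯)·t)`? -/
def isLeftComb : FreeMagma Unit → Bool
  | FreeMagma.of _ => true
  | FreeMagma.mul a (FreeMagma.of _) => isLeftComb a
  | _ => false

/-- Is the tree a right comb `(t·(t·(⋯(t·t))))`? -/
def isRightComb : FreeMagma Unit → Bool
  | FreeMagma.of _ => true
  | FreeMagma.mul (FreeMagma.of _) b => isRightComb b
  | _ => false

variable (K : Type*) [Field K]

/-- The series `g(t) = t − t·t + (t·t)·t − ⋯`, i.e. the element of the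
completed free magmatic algebra whose coefficient on the left comb with `n`
leaves is `(−1)^{n+1}` and whose other coefficients vanish. -/
def gser : FreeMagma Unit → K :=
  fun t => if isLeftComb t then (-1 : K) ^ (size t + 1) else 0

/-- The series `f(t) = t + t·t + t·(t·t) + ⋯`, supported on right combs with
all coefficients `1`. -/
def fser : FreeMagma Unit → K :=
  fun t => if isRightComb t then (1 : K) else 0

/-- The identity series `t`. -/
def idser : FreeMagma Unit → K :=
  fun t => match t with
    | FreeMagma.of _ => 1
    | _ => 0

/-- Convolution (magmatic product) of two series: every tree factors uniquely
as a product of two trees (or is the generator). -/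
def conv (φ ψ : FreeMagma Unit → K) : FreeMagma Unit → K
  | FreeMagma.of _ => 0
  | FreeMagma.mul a b => φ a * ψ b

/-- Substitution of a series `ψ` into a tree `t` (replace each leaf of `t` by
`ψ` and multiply out). -/
def subst (ψ : FreeMagma Unit → K) : FreeMagma Unit → (FreeMagma Unit → K)
  | FreeMagma.of _ => ψ
  | FreeMagma.mul a b => conv K (subst ψ a) (subst ψ b)

/-- Composition of formal series in the completed free magmatic algebra:
substitute `ψ` into each tree of `φ`. -/
noncomputable def comp (φ ψ : FreeMagma Unit → K) : FreeMagma Unit → K :=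
  fun s => ∑ᶠ t : FreeMagma Unit, φ t * subst K ψ t s

/- auxiliary lemmas -/

lemma one_le_size (t : FreeMagma Unit) : 1 ≤ size t := by
  induction t with
  | ih1 u => simp [size]
  | ih2 a b iha ihb => simp [size]; omega

lemma finite_size_le (n : ℕ) : {t : FreeMagma Unit | size t ≤ n}.Finite := by
  induction n with
  | zero =>
    convert Set.finite_empty
    ext t
    simp only [Set.mem_setOf_eq, Set.mem_empty_iff_false, iff_false]
    have := one_le_size t; omega
  | succ n ih =>
    apply Set.Finite.subset (Set.Finite.insert (FreeMagma.of ())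
      (((ih.prod ih).image (fun p : FreeMagma Unit × FreeMagma Unit => p.1 * p.2))))
    intro t ht
    cases t with
    | of u => exact Set.mem_insert _ _
    | mul a b =>
      right
      refine ⟨(a, b), ?_, rfl⟩
      have ha := one_le_size a; have hb := one_le_size b
      simp only [Set.mem_setOf_eq, size] at ht ⊢
      constructor <;> simp <;> omega

lemma subst_size {ψ : FreeMagma Unit → K} {t s : FreeMagma Unit}
    (h : subst K ψ t s ≠ 0) : size t ≤ size s := by
  induction t generalizing s with
  | ih1 u => have := one_le_size s; simp [size]; omega
  | ih2 a b iha ihb =>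
    cases s with
    | of u => simp [subst, conv] at h
    | mul s1 s2 =>
      simp only [subst, conv] at h
      have h1 : subst K ψ a s1 ≠ 0 := fun h0 => h (by rw [h0]; ring)
      have h2 : subst K ψ b s2 ≠ 0 := fun h0 => h (by rw [h0]; ring)
      have := iha h1; have := ihb h2
      simp only [size]; omega

lemma support_finite (φ ψ : FreeMagma Unit → K) (s : FreeMagma Unit) :
    (Function.support fun t => φ t * subst K ψ t s).Finite := by
  apply Set.Finite.subset (finite_size_le (size s))
  intro t ht
  simp only [Function.mem_support] at ht
  exact subst_size K (fun h0 => ht (by rw [h0]; ring))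

lemma comp_of (φ ψ : FreeMagma Unit → K) (u : Unit) :
    comp K φ ψ (FreeMagma.of u) = φ (FreeMagma.of ()) * ψ (FreeMagma.of u) := by
  unfold comp
  rw [finsum_eq_single _ (FreeMagma.of ())]
  · rfl
  · intro t ht
    cases t with
    | of v => exact absurd rfl ht
    | mul a b => simp [subst, conv]

lemma gser_mul_of (a : FreeMagma Unit) :
    gser K (a * FreeMagma.of ()) = -gser K a := by
  have h1 : isLeftComb (a * FreeMagma.of ()) = isLeftComb a := rfl
  have h2 : size (a * FreeMagma.of ()) = size a + 1 := rfl
  simp only [gser, h1, h2]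
  by_cases h : isLeftComb a
  · simp [h, pow_succ]
  · simp [h]

lemma comp_fg_mul (s₁ s₂ : FreeMagma Unit) :
    comp K (fser K) (gser K) (s₁ * s₂) =
      gser K (s₁ * s₂) + comp K (fser K) (gser K) s₂ * gser K s₁ := by
  set h : FreeMagma Unit → K := fun t => fser K t * subst K (gser K) t (s₁ * s₂) with hh
  set j : FreeMagma Unit → FreeMagma Unit := fun b => FreeMagma.of () * b with hj
  have hjinj : Function.Injective j := by
    intro a b hab
    injection hab with h1 h2
  have hnotmem : FreeMagma.of () ∉ Set.range j := by
    rintro ⟨b, hb⟩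
    simp [hj] at hb
  have hsupp : ∀ x ∈ Function.support h,
      x ∈ (Set.univ : Set (FreeMagma Unit)) ↔
        x ∈ insert (FreeMagma.of ()) (Set.range j) := by
    intro t ht
    simp only [Set.mem_univ, true_iff]
    cases t with
    | of u => cases u; exact Set.mem_insert _ _
    | mul a b =>
      cases a with
      | of v => cases v; exact Set.mem_insert_of_mem _ ⟨b, rfl⟩
      | mul a1 a2 =>
        exfalso
        apply ht
        have : fser K ((a1 * a2) * b) = 0 := by simp [fser, isRightComb]
        simp [hh, this]
  have step1 : comp K (fser K) (gser K) (s₁ * s₂) = ∑ᶠ t ∈ insert (FreeMagma.of ())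
      (Set.range j), h t := by
    rw [comp, ← finsum_mem_univ]
    exact finsum_mem_inter_support_eq' h _ _ hsupp
  rw [step1, finsum_mem_insert' h hnotmem
      (((support_finite K (fser K) (gser K) (s₁ * s₂))).inter_of_right _),
    finsum_mem_range hjinj]
  have hof : h (FreeMagma.of ()) = gser K (s₁ * s₂) := by
    simp [hh, fser, isRightComb, subst]
  have hjb : ∀ b, h (j b) = (fser K b * subst K (gser K) b s₂) * gser K s₁ := by
    intro b
    have h1 : fser K (FreeMagma.of () * b) = fser K b := rfl
    have h2 : subst K (gser K) (FreeMagma.of () * b) (s₁ * s₂)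
        = gser K s₁ * subst K (gser K) b s₂ := rfl
    simp only [hh, hj, h1, h2]
    ring
  rw [hof, finsum_congr hjb,
    ← finsum_mul _ _]
  rfl

lemma comp_gf_mul (s₁ s₂ : FreeMagma Unit) :
    comp K (gser K) (fser K) (s₁ * s₂) =
      fser K (s₁ * s₂) + comp K (gser K) (fser K) s₁ * (-(fser K s₂)) := by
  set h : FreeMagma Unit → K := fun t => gser K t * subst K (fser K) t (s₁ * s₂) with hh
  set j : FreeMagma Unit → FreeMagma Unit := fun a => a * FreeMagma.of () with hj
  have hjinj : Function.Injective j := by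
    intro a b hab
    injection hab with h1 h2
  have hnotmem : FreeMagma.of () ∉ Set.range j := by
    rintro ⟨b, hb⟩
    simp [hj] at hb
  have hsupp : ∀ x ∈ Function.support h,
      x ∈ (Set.univ : Set (FreeMagma Unit)) ↔
        x ∈ insert (FreeMagma.of ()) (Set.range j) := by
    intro t ht
    simp only [Set.mem_univ, true_iff]
    cases t with
    | of u => cases u; exact Set.mem_insert _ _
    | mul a b =>
      cases b with
      | of v => cases v; exact Set.mem_insert_of_mem _ ⟨a, rfl⟩
      | mul b1 b2 =>
        exfalso
        apply ht
        have : gser K (a * (b1 * b2)) = 0 := by simp [gser, isLeftComb]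
        simp [hh, this]
  have step1 : comp K (gser K) (fser K) (s₁ * s₂) = ∑ᶠ t ∈ insert (FreeMagma.of ())
      (Set.range j), h t := by
    rw [comp, ← finsum_mem_univ]
    exact finsum_mem_inter_support_eq' h _ _ hsupp
  rw [step1, finsum_mem_insert' h hnotmem
      (((support_finite K (gser K) (fser K) (s₁ * s₂))).inter_of_right _),
    finsum_mem_range hjinj]
  have hof : h (FreeMagma.of ()) = fser K (s₁ * s₂) := by
    simp [hh, gser, isLeftComb, size, subst]
  have hja : ∀ a, h (j a) = (gser K a * subst K (fser K) a s₁) * (-(fser K s₂)) := by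
    intro a
    have h2 : subst K (fser K) (a * FreeMagma.of ()) (s₁ * s₂)
        = subst K (fser K) a s₁ * fser K s₂ := rfl
    simp only [hh, hj, h2, gser_mul_of]
    ring
  rw [hof, finsum_congr hja,
    ← finsum_mul _ _]
  rfl


/-- In `Mag(K)^∧`, the alternating left-comb series `g` and the right-comb
series `f` are mutually inverse for composition: `f ∘ g = id` and
`g ∘ f = id`. -/
theorem fser_gser_comp_inverse :
    comp K (fser K) (gser K) = idser K ∧ comp K (gser K) (fser K) = idser K := by
  constructor
  · funext s
    induction s with
    | ih1 u =>
      cases u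
      rw [comp_of]
      simp [fser, gser, isRightComb, isLeftComb, size, idser]
    | ih2 a b iha ihb =>
      rw [comp_fg_mul, ihb]
      cases b with
      | of u =>
        cases u
        simp [idser, gser_mul_of]
      | mul b1 b2 =>
        have : gser K (a * (b1 * b2)) = 0 := by simp [gser, isLeftComb]
        simp [idser, this]
  · funext s
    induction s with
    | ih1 u =>
      cases u
      rw [comp_of]
      simp [fser, gser, isRightComb, isLeftComb, size, idser]
    | ih2 a b iha ihb =>
      rw [comp_gf_mul, iha]
      cases a with
      | of u =>
        cases u
        have : fser K (FreeMagma.of () * b) = fser K b := rfl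
        simp [idser, this]
      | mul a1 a2 =>
        have : fser K ((a1 * a2) * b) = 0 := by simp [fser, isRightComb]
        simp [idser, this]

end MagSeries
end

section
/- The primitive part of the tensor module T(V) with respect to the co-half-shuffle coproduct Δ_≺ is exactly V: an element x ∈ T(V) satisfies Δ̄_≺(x) = 0 (i.e. Δ_≺(x) = x ⊗ 1) if and only if x ∈ V ⊕ K·1. -/
open scoped TensorProduct

/-- All order-preserving splittings (unshufflings) of a word into two
subwords. -/
def splits {α : Type*} : List α → List (List α × List α)
  | [] => [([], [])]
  | a :: l =>
      ((splits l).map fun p => (a :: p.1, p.2)) ++ ((splits l).map fun p => (p.1, a :: p.2))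

section Aux
variable (K : Type*) {V : Type*} [Field K] [AddCommGroup V] [Module K V]

/-- `x` if the list is empty, else `0`. -/
def headCoeff {T : Type*} [Zero T] (x : T) : List V → T
  | [] => x
  | _ :: _ => 0

lemma listProd_nil : listProd K ([] : List V) = 1 := rfl

lemma listProd_cons (a : V) (l : List V) :
    listProd K (a :: l) = TensorAlgebra.ι K a * listProd K l := by
  simp [listProd]

/-- projection onto degree-1 part -/
noncomputable def proj1 : TensorAlgebra K V →ₗ[K] V := by
  letI : Module Kᵐᵒᵖ V := Module.compHom _ ((RingHom.id K).fromOpposite mul_comm)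
  haveI : IsCentralScalar K V := ⟨fun r m => rfl⟩
  exact (TrivSqZeroExt.sndHom K V).comp (TensorAlgebra.toTrivSqZeroExt).toLinearMap

lemma proj1_ι (v : V) : proj1 K (TensorAlgebra.ι K v) = v := by
  simp [proj1]

lemma proj1_one : proj1 K (1 : TensorAlgebra K V) = 0 := by
  letI : Module Kᵐᵒᵖ V := Module.compHom _ ((RingHom.id K).fromOpposite mul_comm)
  haveI : IsCentralScalar K V := ⟨fun r m => rfl⟩
  simp [proj1]

lemma proj1_ι_mul_ι_mul (a b : V) (x : TensorAlgebra K V) :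
    proj1 K (TensorAlgebra.ι K a * (TensorAlgebra.ι K b * x)) = 0 := by
  letI : Module Kᵐᵒᵖ V := Module.compHom _ ((RingHom.id K).fromOpposite mul_comm)
  haveI : IsCentralScalar K V := ⟨fun r m => rfl⟩
  simp only [proj1, LinearMap.comp_apply, AlgHom.toLinearMap_apply, ← mul_assoc, map_mul,
    TensorAlgebra.toTrivSqZeroExt_ι]
  rw [TrivSqZeroExt.inr_mul_inr K a b, zero_mul, TrivSqZeroExt.sndHom_apply,
    TrivSqZeroExt.snd_zero]

lemma proj1_listProd (a : V) (l : List V) :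
    TensorAlgebra.ι K (proj1 K (listProd K (a :: l)))
      = headCoeff (TensorAlgebra.ι K a) l := by
  cases l with
  | nil => simp [listProd_cons, listProd_nil, proj1_ι, headCoeff]
  | cons b t => simp [listProd_cons, proj1_ι_mul_ι_mul, headCoeff]

lemma splits_sum (w : List V) (x : TensorAlgebra K V) :
    ((splits w).map fun p =>
        headCoeff x p.1 * listProd K p.2).sum = x * listProd K w := by
  induction w generalizing x with
  | nil => simp [splits, listProd_nil, headCoeff]
  | cons b t ih =>
      rw [splits, List.map_append, List.sum_append, List.map_map, List.map_map]
      have h1 : ((splits t).map ((fun p : List V × List V =>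
          headCoeff x p.1 * listProd K p.2) ∘ fun p => (b :: p.1, p.2))).sum = 0 := by
        rw [List.sum_eq_zero]
        intro y hy
        simp only [List.mem_map, Function.comp] at hy
        obtain ⟨p, _, rfl⟩ := hy
        simp [headCoeff]
      rw [h1, zero_add]
      have h2 : ((splits t).map ((fun p : List V × List V =>
          headCoeff x p.1 * listProd K p.2) ∘ fun p => (p.1, b :: p.2)))
          = (splits t).map fun p =>
            headCoeff (x * TensorAlgebra.ι K b) p.1 * listProd K p.2 := by
        apply List.map_congr_left
        rintro ⟨p1, p2⟩ _
        cases p1 <;> simp [headCoeff, listProd_cons, mul_assoc]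
      rw [h2, ih, listProd_cons, ← mul_assoc]

lemma mem_span_listProd (x : TensorAlgebra K V) :
    x ∈ Submodule.span K (Set.range (listProd K (V := V))) := by
  induction x using TensorAlgebra.induction with
  | algebraMap r =>
      have h : (algebraMap K (TensorAlgebra K V)) r = r • listProd K ([] : List V) := by
        simp [listProd_nil, Algebra.algebraMap_eq_smul_one]
      rw [h]
      exact Submodule.smul_mem _ _ (Submodule.subset_span ⟨[], rfl⟩)
  | ι v =>
      have h : TensorAlgebra.ι K v = listProd K [v] := by simp [listProd]
      rw [h]
      exact Submodule.subset_span ⟨[v], rfl⟩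
  | mul a b ha hb =>
      induction ha using Submodule.span_induction with
      | mem u hu =>
          obtain ⟨l, rfl⟩ := hu
          induction hb using Submodule.span_induction with
          | mem z hz =>
              obtain ⟨l', rfl⟩ := hz
              have h : listProd K l * listProd K l' = listProd K (l ++ l') := by
                simp [listProd]
              rw [h]
              exact Submodule.subset_span ⟨l ++ l', rfl⟩
          | zero => simp
          | add y z _ _ hy hz => rw [mul_add]; exact Submodule.add_mem _ hy hz
          | smul c y _ hy => rw [mul_smul_comm]; exact Submodule.smul_mem _ _ hy
      | zero => simp
      | add y z _ _ hy hz => rw [add_mul]; exact Submodule.add_mem _ hy hz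
      | smul c y _ hy => rw [smul_mul_assoc]; exact Submodule.smul_mem _ _ hy
  | add a b ha hb => exact Submodule.add_mem _ ha hb

end Aux

/-- The primitive part of the tensor module `T(V)` with respect to the
co-half-shuffle coproduct is exactly `V`: an element `x` satisfies
`Δ_≺(x) = x ⊗ 1` if and only if `x ∈ K·1 ⊕ V`. -/
theorem primitives_of_cohalf_shuffle
    {K V : Type*} [Field K] [AddCommGroup V] [Module K V]
    (Δ : TensorAlgebra K V →ₗ[K] TensorAlgebra K V ⊗[K] TensorAlgebra K V)
    (hΔone : Δ 1 = 1 ⊗ₜ[K] 1)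
    (hΔ : ∀ (a : V) (w : List V),
      Δ (listProd K (a :: w))
        = ((splits w).map fun p =>
            listProd K (a :: p.1) ⊗ₜ[K] listProd K p.2).sum) :
    ∀ x : TensorAlgebra K V,
      Δ x = x ⊗ₜ[K] 1 ↔
        x ∈ (Submodule.span K {(1 : TensorAlgebra K V)} ⊔
          LinearMap.range (TensorAlgebra.ι K (M := V))) := by
  intro x
  set F : TensorAlgebra K V →ₗ[K] TensorAlgebra K V :=
    (LinearMap.mul' K (TensorAlgebra K V)).comp
      ((TensorProduct.map ((TensorAlgebra.ι K).comp (proj1 K)) LinearMap.id).comp Δ) with hF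
  constructor
  · intro hx
    have hFword : ∀ (a : V) (w : List V),
        F (listProd K (a :: w)) = listProd K (a :: w) := by
      intro a w
      have h1 : F (listProd K (a :: w))
          = ((splits w).map fun p =>
              headCoeff (TensorAlgebra.ι K a) p.1 * listProd K p.2).sum := by
        simp only [hF, LinearMap.comp_apply, hΔ, map_list_sum, List.map_map]
        congr 1
        apply List.map_congr_left
        intro p _
        simp only [Function.comp, TensorProduct.map_tmul, LinearMap.comp_apply,
          LinearMap.id_apply, LinearMap.mul'_apply, proj1_listProd]
      rw [h1, splits_sum, ← listProd_cons]
    have hF1 : F (1 : TensorAlgebra K V) = 0 := by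
      simp [hF, hΔone, proj1_one]
    have hG : ∀ y : TensorAlgebra K V,
        y - F y ∈ Submodule.span K {(1 : TensorAlgebra K V)} := by
      intro y
      have hy := mem_span_listProd K y
      induction hy using Submodule.span_induction with
      | mem u hu =>
          obtain ⟨l, rfl⟩ := hu
          cases l with
          | nil =>
              rw [listProd_nil, hF1, sub_zero]
              exact Submodule.mem_span_singleton_self _
          | cons a w =>
              rw [hFword, sub_self]
              exact Submodule.zero_mem _
      | zero => simp
      | add y z _ _ hy hz =>
          have : y + z - F (y + z) = (y - F y) + (z - F z) := by
            rw [map_add]; abel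
          rw [this]; exact Submodule.add_mem _ hy hz
      | smul c y _ hy =>
          have : c • y - F (c • y) = c • (y - F y) := by
            rw [map_smul, smul_sub]
          rw [this]; exact Submodule.smul_mem _ _ hy
    have hFx : F x = TensorAlgebra.ι K (proj1 K x) := by
      simp [hF, hx]
    have hxeq : x = (x - F x) + F x := by abel
    rw [hxeq]
    refine Submodule.add_mem _ (Submodule.mem_sup_left (hG x)) ?_
    rw [hFx]
    exact Submodule.mem_sup_right ⟨proj1 K x, rfl⟩
  · intro h
    rw [Submodule.mem_sup] at h
    obtain ⟨y, hy, z, hz, rfl⟩ := h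
    rw [Submodule.mem_span_singleton] at hy
    obtain ⟨c, rfl⟩ := hy
    obtain ⟨v, rfl⟩ := hz
    have hv : Δ (TensorAlgebra.ι K v) = TensorAlgebra.ι K v ⊗ₜ[K] 1 := by
      have h := hΔ v []
      simpa [splits, listProd] using h
    rw [map_add, map_smul, hΔone, hv, TensorProduct.add_tmul, TensorProduct.smul_tmul']
end
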